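/- arXiv:2308.15845 — 6 statements merged into one kernel-verified Lean document; each statement's English description precedes it below -/
import Mathlib

section
/- Let K be a commutative field. A square matrix A over K is X-formable if and only if A is similar to a block-diagonal matrix in which each diagonal block is a square matrix of size at most 2. -/
open Polynomial

/-- An `n × n` matrix is an X-form matrix if all its entries off the diagonal and the
anti-diagonal vanish. -/
def IsXForm {K : Type*} [Field K] {n : ℕ} (A : Matrix (Fin n) (Fin n) K) : Prop :=
  ∀ i j : Fin n, (i : ℕ) ≠ (j : ℕ) → (i : ℕ) + (j : ℕ) ≠ n - 1 → A i j = 0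

/-- A matrix is X-formable if it is similar to an X-form matrix. -/
def IsXFormable {K : Type*} [Field K] {n : ℕ} (A : Matrix (Fin n) (Fin n) K) : Prop :=
  ∃ B : Matrix (Fin n) (Fin n) K, IsXForm B ∧
    ∃ P : (Matrix (Fin n) (Fin n) K)ˣ,
      A = (P : Matrix (Fin n) (Fin n) K) * B * ((↑P⁻¹ : Matrix (Fin n) (Fin n) K))

lemma sig_ext {k : ℕ} {sz : Fin k → ℕ} {x y : Σ i : Fin k, Fin (sz i)}
    (h1 : (x.1 : ℕ) = (y.1 : ℕ)) (h2 : (x.2 : ℕ) = (y.2 : ℕ)) : x = y := by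
  obtain ⟨i, a⟩ := x
  obtain ⟨j, b⟩ := y
  have : i = j := Fin.ext h1
  subst this
  exact congrArg (Sigma.mk i) (Fin.ext h2)

lemma submatrix_equiv_similar {K : Type*} [Field K] {n : ℕ} (σ : Fin n ≃ Fin n)
    (M : Matrix (Fin n) (Fin n) K) :
    ∃ Q : (Matrix (Fin n) (Fin n) K)ˣ,
      M.submatrix σ σ = (Q : Matrix (Fin n) (Fin n) K) * M * ((↑Q⁻¹ : Matrix (Fin n) (Fin n) K)) := by
  refine ⟨⟨(1 : Matrix (Fin n) (Fin n) K).submatrix ⇑σ ⇑(Equiv.refl (Fin n)),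
           (1 : Matrix (Fin n) (Fin n) K).submatrix ⇑(Equiv.refl (Fin n)) ⇑σ, ?_, ?_⟩, ?_⟩
  · rw [Matrix.one_submatrix_mul]
    simp [Matrix.submatrix_submatrix, Function.comp_def]
  · rw [Matrix.mul_submatrix_one]
    simp only [Matrix.submatrix_submatrix, Function.comp_def, Equiv.refl_symm, Equiv.refl_apply]
    ext i j
    simp [Matrix.submatrix_apply]
  · show M.submatrix ⇑σ ⇑σ = (1 : Matrix (Fin n) (Fin n) K).submatrix ⇑σ ⇑(Equiv.refl (Fin n)) * M *
      (1 : Matrix (Fin n) (Fin n) K).submatrix ⇑(Equiv.refl (Fin n)) ⇑σ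
    rw [Matrix.one_submatrix_mul, Matrix.mul_submatrix_one]
    simp [Matrix.submatrix_submatrix, Function.comp_def]


/-- The pairing map for the forward direction. -/
def xf {n : ℕ} (x : Σ i : Fin ((n+1)/2), Fin (min 2 (n - 2*(i:ℕ)))) : Fin n :=
  if (x.2 : ℕ) = 0 then ⟨(x.1 : ℕ), by have h1 := x.1.2; have h2 := x.2.2; omega⟩
  else ⟨n - 1 - (x.1 : ℕ), by have h1 := x.1.2; have h2 := x.2.2; omega⟩

lemma xf_bij {n : ℕ} : Function.Bijective (@xf n) := by
  constructor
  · rintro ⟨i, a⟩ ⟨j, b⟩ h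
    have hv := congrArg Fin.val h
    have ha := a.2; have hb := b.2; have hi := i.2; have hj := j.2
    have ha' : (a : ℕ) = 0 ∨ (a : ℕ) = 1 := by omega
    have hb' : (b : ℕ) = 0 ∨ (b : ℕ) = 1 := by omega
    apply sig_ext <;>
    · rcases ha' with h1 | h1 <;> rcases hb' with h2 | h2 <;>
        simp [xf, h1, h2] at hv ⊢ <;> omega
  · intro j
    have hj := j.2
    by_cases h : 2*(j:ℕ)+1 ≤ n
    · exact ⟨⟨⟨j, by omega⟩, ⟨0, by omega⟩⟩, Fin.ext (by simp [xf])⟩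
    · refine ⟨⟨⟨n-1-(j:ℕ), by omega⟩, ⟨1, by show 1 < min 2 (n - 2*(n-1-(j:ℕ))); omega⟩⟩, Fin.ext ?_⟩
      simp [xf]
      omega

lemma isXForm_blockDecomp {K : Type*} [Field K] {n : ℕ} (B : Matrix (Fin n) (Fin n) K)
    (hB : IsXForm B) :
    ∃ (k : ℕ) (sz : Fin k → ℕ), (∀ i, sz i ≤ 2) ∧
      ∃ (blocks : ∀ i : Fin k, Matrix (Fin (sz i)) (Fin (sz i)) K)
        (e : (Σ i : Fin k, Fin (sz i)) ≃ Fin n),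
        B = Matrix.reindex e e (Matrix.blockDiagonal' blocks) := by
  refine ⟨(n+1)/2, fun i => min 2 (n - 2*(i:ℕ)), fun i => min_le_left _ _,
    fun i => Matrix.of fun a b => B (xf ⟨i, a⟩) (xf ⟨i, b⟩),
    Equiv.ofBijective xf xf_bij, ?_⟩
  set e := Equiv.ofBijective xf (@xf_bij n) with he
  have key : ∀ x y, B (xf x) (xf y) =
      Matrix.blockDiagonal' (fun i => Matrix.of fun a b => B (xf ⟨i, a⟩) (xf ⟨i, b⟩)) x y := by
    rintro ⟨i, a⟩ ⟨j, b⟩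
    by_cases h : i = j
    · subst h
      rw [Matrix.blockDiagonal'_apply_eq]
      rfl
    · rw [Matrix.blockDiagonal'_apply ((fun i => Matrix.of fun a b => B (xf ⟨i, a⟩) (xf ⟨i, b⟩)) : ∀ i : Fin ((n+1)/2), Matrix (Fin (min 2 (n - 2*(i:ℕ)))) (Fin (min 2 (n - 2*(i:ℕ)))) K) ⟨i,a⟩ ⟨j,b⟩, dif_neg h]
      have hij : (i : ℕ) ≠ (j : ℕ) := fun hh => h (Fin.ext hh)
      have ha := a.2; have hb := b.2; have hi := i.2; have hj := j.2
      have ha' : (a : ℕ) = 0 ∨ (a : ℕ) = 1 := by omega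
      have hb' : (b : ℕ) = 0 ∨ (b : ℕ) = 1 := by omega
      apply hB <;>
      · rcases ha' with h1 | h1 <;> rcases hb' with h2 | h2 <;>
          simp [xf, h1, h2] <;> omega
  ext r c
  rw [Matrix.reindex_apply, Matrix.submatrix_apply, ← key (e.symm r) (e.symm c)]
  have h1 : xf (e.symm r) = r := e.apply_symm_apply r
  have h2 : xf (e.symm c) = c := e.apply_symm_apply c
  rw [h1, h2]

/-- Placement map for the reverse direction: blocks of size 2 are sent to complementary
pairs `{p, n-1-p}`, blocks of size 1 to the middle band. -/
def phi {k n t s : ℕ} (sz : Fin k → ℕ) (hsz : ∀ i, sz i ≤ 2)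
    (τ₂ : {i : Fin k // sz i = 2} ≃ Fin t) (τ₁ : {i : Fin k // sz i = 1} ≃ Fin s)
    (htn : 2 * t + s = n) : (Σ i : Fin k, Fin (sz i)) → Fin n := fun x =>
  if h2 : sz x.1 = 2 then
    if (x.2 : ℕ) = 0 then
      ⟨(τ₂ ⟨x.1, h2⟩ : ℕ), by have := (τ₂ ⟨x.1, h2⟩).2; omega⟩
    else
      ⟨n - 1 - (τ₂ ⟨x.1, h2⟩ : ℕ), by have := (τ₂ ⟨x.1, h2⟩).2; omega⟩
  else
    have h1 : sz x.1 = 1 := by have := x.2.2; have := hsz x.1; omega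
    ⟨t + (τ₁ ⟨x.1, h1⟩ : ℕ), by have := (τ₁ ⟨x.1, h1⟩).2; omega⟩

section PhiVal
variable {k n t s : ℕ} {sz : Fin k → ℕ} {hsz : ∀ i, sz i ≤ 2}
    {τ₂ : {i : Fin k // sz i = 2} ≃ Fin t} {τ₁ : {i : Fin k // sz i = 1} ≃ Fin s}
    {htn : 2 * t + s = n}

lemma phi_val2_0 (x : Σ i : Fin k, Fin (sz i)) (h2 : sz x.1 = 2) (h0 : (x.2 : ℕ) = 0) :
    (phi sz hsz τ₂ τ₁ htn x : ℕ) = (τ₂ ⟨x.1, h2⟩ : ℕ) := by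
  simp [phi, h2, h0]

lemma phi_val2_1 (x : Σ i : Fin k, Fin (sz i)) (h2 : sz x.1 = 2) (h0 : (x.2 : ℕ) = 1) :
    (phi sz hsz τ₂ τ₁ htn x : ℕ) = n - 1 - (τ₂ ⟨x.1, h2⟩ : ℕ) := by
  simp [phi, h2, h0]

lemma phi_val1 (x : Σ i : Fin k, Fin (sz i)) (h1 : sz x.1 = 1) :
    (phi sz hsz τ₂ τ₁ htn x : ℕ) = t + (τ₁ ⟨x.1, h1⟩ : ℕ) := by
  simp [phi, show ¬ sz x.1 = 2 by omega]

lemma phi_inj : Function.Injective (phi sz hsz τ₂ τ₁ htn) := by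
  have key2 : ∀ (i j : Fin k) (h : sz i = 2) (h' : sz j = 2),
      (τ₂ ⟨i, h⟩ : ℕ) = (τ₂ ⟨j, h'⟩ : ℕ) → (i : ℕ) = (j : ℕ) := by
    intro i j h h' hh
    have h3 := τ₂.injective (Fin.ext hh)
    exact congrArg (fun z : {i : Fin k // sz i = 2} => ((z : Fin k) : ℕ)) h3
  have key1 : ∀ (i j : Fin k) (h : sz i = 1) (h' : sz j = 1),
      (τ₁ ⟨i, h⟩ : ℕ) = (τ₁ ⟨j, h'⟩ : ℕ) → (i : ℕ) = (j : ℕ) := by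
    intro i j h h' hh
    have h3 := τ₁.injective (Fin.ext hh)
    exact congrArg (fun z : {i : Fin k // sz i = 1} => ((z : Fin k) : ℕ)) h3
  intro x y h
  have hv := congrArg Fin.val h
  have ha := x.2.2; have hb := y.2.2
  have hia := hsz x.1; have hjb := hsz y.1
  by_cases hi2 : sz x.1 = 2 <;> by_cases hj2 : sz y.1 = 2
  · have ha' : (x.2 : ℕ) = 0 ∨ (x.2 : ℕ) = 1 := by omega
    have hb' : (y.2 : ℕ) = 0 ∨ (y.2 : ℕ) = 1 := by omega
    have hpi := (τ₂ ⟨x.1, hi2⟩).2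
    have hpj := (τ₂ ⟨y.1, hj2⟩).2
    rcases ha' with h1 | h1 <;> rcases hb' with h2 | h2
    · rw [phi_val2_0 x hi2 h1, phi_val2_0 y hj2 h2] at hv
      exact sig_ext (key2 _ _ hi2 hj2 hv) (by omega)
    · rw [phi_val2_0 x hi2 h1, phi_val2_1 y hj2 h2] at hv
      exact absurd hv (by omega)
    · rw [phi_val2_1 x hi2 h1, phi_val2_0 y hj2 h2] at hv
      exact absurd hv (by omega)
    · rw [phi_val2_1 x hi2 h1, phi_val2_1 y hj2 h2] at hv
      have : (τ₂ ⟨x.1, hi2⟩ : ℕ) = (τ₂ ⟨y.1, hj2⟩ : ℕ) := by omega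
      exact sig_ext (key2 _ _ hi2 hj2 this) (by omega)
  · have h1 : sz y.1 = 1 := by omega
    have hpi := (τ₂ ⟨x.1, hi2⟩).2
    have hpj := (τ₁ ⟨y.1, h1⟩).2
    have ha' : (x.2 : ℕ) = 0 ∨ (x.2 : ℕ) = 1 := by omega
    exfalso
    rw [phi_val1 y h1] at hv
    rcases ha' with h0 | h0
    · rw [phi_val2_0 x hi2 h0] at hv; omega
    · rw [phi_val2_1 x hi2 h0] at hv; omega
  · have h1 : sz x.1 = 1 := by omega
    have hpi := (τ₁ ⟨x.1, h1⟩).2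
    have hpj := (τ₂ ⟨y.1, hj2⟩).2
    have hb' : (y.2 : ℕ) = 0 ∨ (y.2 : ℕ) = 1 := by omega
    exfalso
    rw [phi_val1 x h1] at hv
    rcases hb' with h0 | h0
    · rw [phi_val2_0 y hj2 h0] at hv; omega
    · rw [phi_val2_1 y hj2 h0] at hv; omega
  · have h1 : sz x.1 = 1 := by omega
    have h1' : sz y.1 = 1 := by omega
    rw [phi_val1 x h1, phi_val1 y h1'] at hv
    exact sig_ext (key1 _ _ h1 h1' (by omega)) (by omega)

end PhiVal

lemma card_two_one {k n : ℕ} (sz : Fin k → ℕ) (hsz : ∀ i, sz i ≤ 2)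
    (hn : ∑ i, sz i = n) :
    2 * Fintype.card {i : Fin k // sz i = 2} + Fintype.card {i : Fin k // sz i = 1} = n := by
  rw [Fintype.card_subtype, Fintype.card_subtype, Finset.card_filter, Finset.card_filter, ← hn,
    Finset.mul_sum, ← Finset.sum_add_distrib]
  apply Finset.sum_congr rfl
  intro i _
  have := hsz i
  interval_cases h : sz i <;> simp

lemma reverse_xformable {K : Type*} [Field K] {n k : ℕ} (sz : Fin k → ℕ)
    (hsz : ∀ i, sz i ≤ 2) (blocks : ∀ i : Fin k, Matrix (Fin (sz i)) (Fin (sz i)) K)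
    (e : (Σ i : Fin k, Fin (sz i)) ≃ Fin n) :
    IsXFormable (Matrix.reindex e e (Matrix.blockDiagonal' blocks)) := by
  have hcard : Fintype.card (Σ i : Fin k, Fin (sz i)) = n := by
    rw [Fintype.card_congr e, Fintype.card_fin]
  have hsum : ∑ i, sz i = n := by
    rw [Fintype.card_sigma] at hcard
    simpa using hcard
  set t := Fintype.card {i : Fin k // sz i = 2} with ht
  set s := Fintype.card {i : Fin k // sz i = 1} with hs
  have htn : 2 * t + s = n := card_two_one sz hsz hsum
  set τ₂ := Fintype.equivFin {i : Fin k // sz i = 2} with hτ₂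
  set τ₁ := Fintype.equivFin {i : Fin k // sz i = 1} with hτ₁
  have hbij : Function.Bijective (phi sz hsz τ₂ τ₁ htn) :=
    (Fintype.bijective_iff_injective_and_card _).mpr ⟨phi_inj, by rw [hcard, Fintype.card_fin]⟩
  set φe := Equiv.ofBijective _ hbij with hφe
  set X := Matrix.reindex φe φe (Matrix.blockDiagonal' blocks) with hX
  have hXform : IsXForm X := by
    intro r c hne hsum'
    rw [hX, Matrix.reindex_apply, Matrix.submatrix_apply]
    set x := φe.symm r with hxd
    set y := φe.symm c with hyd
    have hx : phi sz hsz τ₂ τ₁ htn x = r := φe.apply_symm_apply r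
    have hy : phi sz hsz τ₂ τ₁ htn y = c := φe.apply_symm_apply c
    by_cases hxy : x.1 = y.1
    · exfalso
      have hvx := congrArg Fin.val hx
      have hvy := congrArg Fin.val hy
      have ha := x.2.2; have hb := y.2.2
      have hia := hsz x.1
      by_cases h2 : sz x.1 = 2
      · have h2' : sz y.1 = 2 := hxy ▸ h2
        have hpx := (τ₂ ⟨x.1, h2⟩).2
        have hpy := (τ₂ ⟨y.1, h2'⟩).2
        have hpe : (τ₂ ⟨x.1, h2⟩ : ℕ) = (τ₂ ⟨y.1, h2'⟩ : ℕ) :=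
          congrArg (fun z : {i : Fin k // sz i = 2} => ((τ₂ z : Fin t) : ℕ))
            (show (⟨x.1, h2⟩ : {i : Fin k // sz i = 2}) = ⟨y.1, h2'⟩ from Subtype.ext hxy)
        have ha' : (x.2 : ℕ) = 0 ∨ (x.2 : ℕ) = 1 := by omega
        have hb' : (y.2 : ℕ) = 0 ∨ (y.2 : ℕ) = 1 := by omega
        rcases ha' with h0 | h0 <;> rcases hb' with h0' | h0'
        · rw [phi_val2_0 x h2 h0] at hvx
          rw [phi_val2_0 y h2' h0'] at hvy
          omega
        · rw [phi_val2_0 x h2 h0] at hvx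
          rw [phi_val2_1 y h2' h0'] at hvy
          omega
        · rw [phi_val2_1 x h2 h0] at hvx
          rw [phi_val2_0 y h2' h0'] at hvy
          omega
        · rw [phi_val2_1 x h2 h0] at hvx
          rw [phi_val2_1 y h2' h0'] at hvy
          omega
      · have h1 : sz x.1 = 1 := by omega
        have h1' : sz y.1 = 1 := hxy ▸ h1
        have hpx := (τ₁ ⟨x.1, h1⟩).2
        have hpe : (τ₁ ⟨x.1, h1⟩ : ℕ) = (τ₁ ⟨y.1, h1'⟩ : ℕ) :=
          congrArg (fun z : {i : Fin k // sz i = 1} => ((τ₁ z : Fin s) : ℕ))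
            (show (⟨x.1, h1⟩ : {i : Fin k // sz i = 1}) = ⟨y.1, h1'⟩ from Subtype.ext hxy)
        rw [phi_val1 x h1] at hvx
        rw [phi_val1 y h1'] at hvy
        omega
    · rw [Matrix.blockDiagonal'_apply blocks x y, dif_neg hxy]
  -- now express reindex e e as a permuted version of X
  set ρ : Fin n ≃ Fin n := e.symm.trans φe with hρ
  have hM : Matrix.reindex e e (Matrix.blockDiagonal' blocks) = X.submatrix ⇑ρ ⇑ρ := by
    ext r c
    simp [hX, hρ, Matrix.reindex_apply, Matrix.submatrix_apply]
  obtain ⟨Q, hQ⟩ := submatrix_equiv_similar ρ X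
  exact ⟨X, hXform, Q, by rw [hM, hQ]⟩

/-- A matrix is X-formable iff it is similar to a block-diagonal matrix in which every
diagonal block is a square matrix of size at most `2`. -/
theorem xformable_iff_similar_blockDiagonal {K : Type*} [Field K] {n : ℕ}
    (A : Matrix (Fin n) (Fin n) K) :
    IsXFormable A ↔
      ∃ (k : ℕ) (sz : Fin k → ℕ), (∀ i, sz i ≤ 2) ∧
        ∃ (blocks : ∀ i : Fin k, Matrix (Fin (sz i)) (Fin (sz i)) K)
          (e : (Σ i : Fin k, Fin (sz i)) ≃ Fin n)
          (P : (Matrix (Fin n) (Fin n) K)ˣ),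
          A = (P : Matrix (Fin n) (Fin n) K) *
                (Matrix.reindex e e (Matrix.blockDiagonal' blocks)) *
                ((↑P⁻¹ : Matrix (Fin n) (Fin n) K)) := by
  constructor
  · rintro ⟨B, hB, P, hP⟩
    obtain ⟨k, sz, hsz, blocks, e', hBe⟩ := isXForm_blockDecomp B hB
    exact ⟨k, sz, hsz, blocks, e', P, by rw [hP, hBe]⟩
  · rintro ⟨k, sz, hsz, blocks, e, P, hA⟩
    obtain ⟨X, hX, Q, hQ⟩ := reverse_xformable sz hsz blocks e
    refine ⟨X, hX, P * Q, ?_⟩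
    rw [hA, hQ]
    simp [Units.val_mul, mul_inv_rev, mul_assoc]
end

section
/- Let K be an algebraically closed field and A an n×n matrix over K. Then A is X-formable if and only if all the Jordan blocks in the Jordan normal form of A have size 1 or 2; equivalently, for every eigenvalue λ of A, the kernel of (A − λI)² equals the kernel of (A − λI)ⁿ (the generalized eigenspace of λ). -/
open Polynomial

section Aux

open Module Matrix

variable {K : Type*} [Field K] {n : ℕ}

/-- Structure basis for a square-zero endomorphism. -/
lemma sq_zero_basis {K V : Type*} [Field K] [AddCommGroup V] [Module K V]
    [FiniteDimensional K V] (g : Module.End K V) (hg : ∀ x, g (g x) = 0) :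
    ∃ (r s : ℕ) (b : Basis (Fin r ⊕ (Fin r ⊕ Fin s)) K V),
      (∀ i, g (b (.inl i)) = b (.inr (.inl i))) ∧ (∀ j, g (b (.inr j)) = 0) := by
  classical
  set E := LinearMap.ker g with hE
  obtain ⟨U, hU⟩ := Submodule.exists_isCompl E
  let r := finrank K U
  let bU : Basis (Fin r) K U := finBasis K U
  have hvE : ∀ x : V, g x ∈ E := fun x => by simp [hE, hg x]
  let v' : Fin r → E := fun i => ⟨g (bU i), hvE _⟩
  have hv'li : LinearIndependent K v' := by
    rw [Fintype.linearIndependent_iff]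
    intro c hc
    have h1 : g (↑(∑ i, c i • bU i)) = 0 := by
      have := congrArg (Submodule.subtype E) hc
      push_cast at this
      simpa [map_sum] using this
    have h2 : (↑(∑ i, c i • bU i) : V) ∈ E ⊓ U := ⟨h1, (∑ i, c i • bU i).2⟩
    rw [hU.inf_eq_bot] at h2
    have h3 : (∑ i, c i • bU i) = 0 := Subtype.ext h2
    exact fun i => Fintype.linearIndependent_iff.mp bU.linearIndependent c h3 i
  let E1 : Submodule K E := Submodule.span K (Set.range v')
  let bE1 : Basis (Fin r) K E1 := Basis.span hv'li
  obtain ⟨E2, hE2⟩ := Submodule.exists_isCompl E1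
  let s := finrank K E2
  let bE2 : Basis (Fin s) K E2 := finBasis K E2
  let bE : Basis (Fin r ⊕ Fin s) K E :=
    (bE1.prod bE2).map (Submodule.prodEquivOfIsCompl E1 E2 hE2)
  let b : Basis (Fin r ⊕ (Fin r ⊕ Fin s)) K V :=
    ((bU.prod bE).map (Submodule.prodEquivOfIsCompl U E hU.symm))
  have hbE : ∀ j, (↑(bE j) : V) ∈ E := fun j => (bE j).2
  have hb_inl : ∀ i, b (.inl i) = (bU i : V) := by
    intro i
    simp [b, Basis.prod_apply, Submodule.coe_prodEquivOfIsCompl']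
  have hb_inr : ∀ j, b (.inr j) = (bE j : V) := by
    intro j
    simp [b, Basis.prod_apply, Submodule.coe_prodEquivOfIsCompl']
  have hbE_inl : ∀ i, (bE (.inl i) : V) = g (bU i) := by
    intro i
    have h1 : (bE (Sum.inl i) : E) = ↑(bE1 i) := by
      simp [bE, Basis.prod_apply, Submodule.coe_prodEquivOfIsCompl']
    have h2 : ((bE1 i : E) : V) = g (bU i) := by
      have := Basis.span_apply hv'li i
      rw [show bE1 i = Basis.span hv'li i from rfl, this]
    rw [h1, h2]
  refine ⟨r, s, b, ?_, ?_⟩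
  · intro i
    rw [hb_inl, hb_inr, hbE_inl]
  · intro j
    rw [hb_inr]
    exact hbE j

lemma IsXForm.apply_eq_zero {M : Matrix (Fin n) (Fin n) K} (hM : IsXForm M)
    {a b : Fin n} (h1 : a ≠ b) (h2 : a ≠ b.rev) : M a b = 0 := by
  apply hM
  · exact fun h => h1 (Fin.ext h)
  · intro h
    apply h2
    apply Fin.ext
    rw [Fin.val_rev]
    omega

/-- Projection onto the coordinates `{i, rev i}`. -/
def pairProj (K : Type*) [Field K] {n : ℕ} (i : Fin n) : (Fin n → K) →ₗ[K] (Fin n → K) where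
  toFun w := fun j => if j = i ∨ j = i.rev then w j else 0
  map_add' w₁ w₂ := by funext j; by_cases h : j = i ∨ j = i.rev <;> simp [h]
  map_smul' c w := by funext j; by_cases h : j = i ∨ j = i.rev <;> simp [h]

lemma pairProj_apply (i : Fin n) (w : Fin n → K) (j : Fin n) :
    pairProj K i w j = if j = i ∨ j = i.rev then w j else 0 := rfl

lemma mem_pair_of_rev {i j k : Fin n} (hk : k = i ∨ k = i.rev) (hj : j = k.rev) :
    j = i ∨ j = i.rev := by
  rcases hk with h | h
  · subst h; exact Or.inr hj
  · subst h; rw [Fin.rev_rev] at hj; exact Or.inl hj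

lemma pairProj_mulVec {M : Matrix (Fin n) (Fin n) K} (hM : IsXForm M) (i : Fin n)
    (w : Fin n → K) : pairProj K i (M *ᵥ w) = M *ᵥ (pairProj K i w) := by
  funext j
  rw [pairProj_apply]
  simp only [Matrix.mulVec, dotProduct]
  by_cases hj : j = i ∨ j = i.rev
  · rw [if_pos hj]
    apply Finset.sum_congr rfl
    intro k _
    by_cases hk : k = i ∨ k = i.rev
    · rw [pairProj_apply, if_pos hk]
    · rw [pairProj_apply, if_neg hk, mul_zero, hM.apply_eq_zero, zero_mul]
      · rintro rfl; exact hk hj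
      · intro h
        exact hk (mem_pair_of_rev hj (by rw [h, Fin.rev_rev]))
  · rw [if_neg hj]
    symm
    apply Finset.sum_eq_zero
    intro k _
    by_cases hk : k = i ∨ k = i.rev
    · rw [hM.apply_eq_zero, zero_mul]
      · rintro rfl; exact hj hk
      · intro h; exact hj (mem_pair_of_rev hk h)
    · rw [pairProj_apply, if_neg hk, mul_zero]

/-- The coordinate subspace supported on `{i, rev i}`. -/
def pairSub (K : Type*) [Field K] {n : ℕ} (i : Fin n) : Submodule K (Fin n → K) where
  carrier := {w | ∀ j, ¬(j = i ∨ j = i.rev) → w j = 0}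
  add_mem' := by intro a b ha hb j hj; simp [ha j hj, hb j hj]
  zero_mem' := by intro j _; rfl
  smul_mem' := by intro c a ha j hj; simp [ha j hj]

lemma pairProj_mem (i : Fin n) (w : Fin n → K) : pairProj K i w ∈ pairSub K i := by
  intro j hj
  rw [pairProj_apply, if_neg hj]

lemma pairProj_eq_self {i : Fin n} {w : Fin n → K} (hw : w ∈ pairSub K i) :
    pairProj K i w = w := by
  funext j
  rw [pairProj_apply]
  by_cases hj : j = i ∨ j = i.rev
  · rw [if_pos hj]
  · rw [if_neg hj, hw j hj]

lemma pairSub_le_span (i : Fin n) :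
    pairSub K i ≤ Submodule.span K {(Pi.single i 1 : Fin n → K), (Pi.single i.rev 1 : Fin n → K)} := by
  intro w hw
  by_cases h : i.rev = i
  · have : w = w i • (Pi.single i 1 : Fin n → K) := by
      funext j
      simp only [Pi.smul_apply, Pi.single_apply, smul_eq_mul, mul_ite, mul_one, mul_zero]
      by_cases hj : j = i
      · rw [if_pos hj, hj]
      · rw [if_neg hj]
        exact hw j (by rintro (h' | h'); exacts [hj h', hj (h'.trans h)])
    rw [this]
    exact Submodule.smul_mem _ _ (Submodule.subset_span (by simp))
  · have : w = w i • (Pi.single i 1 : Fin n → K) + w i.rev • (Pi.single i.rev 1 : Fin n → K) := by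
      funext j
      simp only [Pi.add_apply, Pi.smul_apply, Pi.single_apply, smul_eq_mul, mul_ite, mul_one,
        mul_zero]
      by_cases hj : j = i
      · rw [if_pos hj, if_neg (fun h' : j = i.rev => h (h'.symm.trans hj)), add_zero, hj]
      · rw [if_neg hj]
        by_cases hj' : j = i.rev
        · rw [if_pos hj', zero_add, hj']
        · rw [if_neg hj', add_zero]
          exact hw j (by rintro (h' | h'); exacts [hj h', hj' h'])
    rw [this]
    exact Submodule.add_mem _
      (Submodule.smul_mem _ _ (Submodule.subset_span (by simp)))
      (Submodule.smul_mem _ _ (Submodule.subset_span (by simp)))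

lemma finrank_pairSub_le_two (i : Fin n) : finrank K (pairSub K i) ≤ 2 := by
  classical
  set a : Fin n → K := Pi.single i 1
  set b : Fin n → K := Pi.single i.rev 1
  have h1 : pairSub K i ≤ Submodule.span K (↑({a, b} : Finset (Fin n → K)) : Set (Fin n → K)) := by
    simpa using pairSub_le_span i
  calc finrank K (pairSub K i) ≤ finrank K (Submodule.span K
        (↑({a, b} : Finset (Fin n → K)) : Set (Fin n → K))) := Submodule.finrank_mono h1
    _ ≤ ({a, b} : Finset (Fin n → K)).card := finrank_span_finset_le_card _
    _ ≤ 2 := (Finset.card_insert_le _ _).trans (by simp)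

lemma mulVec_mem_pairSub {M : Matrix (Fin n) (Fin n) K} (hM : IsXForm M) {i : Fin n}
    {w : Fin n → K} (hw : w ∈ pairSub K i) : M *ᵥ w ∈ pairSub K i := by
  rw [← pairProj_eq_self hw, ← pairProj_mulVec hM]
  exact pairProj_mem i _

/-- Key lemma: kernels of powers of an X-form matrix stabilize at exponent 2 (blockwise). -/
lemma xform_pow_ker {M : Matrix (Fin n) (Fin n) K} (hM : IsXForm M) {k l : ℕ}
    (hk : ∀ i : Fin n, finrank K (pairSub K i) ≤ k)
    (hl : ∀ i : Fin n, finrank K (pairSub K i) ≤ l)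
    (v : Fin n → K) (hv : (M.mulVecLin ^ k) v = 0) : (M.mulVecLin ^ l) v = 0 := by
  classical
  set g := M.mulVecLin with hg
  have hmapsTo : ∀ i : Fin n, ∀ x ∈ pairSub K i, g x ∈ pairSub K i := by
    intro i x hx
    exact mulVec_mem_pairSub hM hx
  have hcomm : ∀ (i : Fin n) (a : ℕ) (w : Fin n → K),
      pairProj K i ((g ^ a) w) = (g ^ a) (pairProj K i w) := by
    intro i a
    induction a with
    | zero => intro w; simp
    | succ a ih =>
      intro w
      simp only [pow_succ, Module.End.mul_apply]
      rw [ih (g w)]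
      congr 1
      exact pairProj_mulVec hM i w
  have key : ∀ i : Fin n, (g ^ l) (pairProj K i v) = 0 := by
    intro i
    have h1 : (g ^ k) (pairProj K i v) = 0 := by
      rw [← hcomm, hv, map_zero]
    let gi := g.restrict (p := pairSub K i) (q := pairSub K i) (hmapsTo i)
    have hpow : ∀ a : ℕ, ∀ x : pairSub K i, ((gi ^ a) x : Fin n → K) = (g ^ a) (x : Fin n → K) := by
      intro a
      induction a with
      | zero => intro x; simp
      | succ a ih =>
        intro x
        simp only [pow_succ, Module.End.mul_apply]
        rw [ih (gi x)]
        congr 1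
    have hxk : (⟨pairProj K i v, pairProj_mem i v⟩ : pairSub K i) ∈ LinearMap.ker (gi ^ k) := by
      rw [LinearMap.mem_ker]
      apply Subtype.ext
      rw [hpow]
      exact h1
    have hek : LinearMap.ker (gi ^ k) = LinearMap.ker (gi ^ finrank K (pairSub K i)) :=
      Module.End.ker_pow_eq_ker_pow_finrank_of_le (hk i)
    have hel : LinearMap.ker (gi ^ l) = LinearMap.ker (gi ^ finrank K (pairSub K i)) :=
      Module.End.ker_pow_eq_ker_pow_finrank_of_le (hl i)
    rw [hek, ← hel, LinearMap.mem_ker] at hxk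
    have := congrArg (Subtype.val) hxk
    rw [hpow] at this
    exact this
  funext j
  have h2 : (g ^ l) (pairProj K j v) j = 0 := by rw [key j]; rfl
  show (g ^ l) v j = (0 : Fin n → K) j
  rw [Pi.zero_apply, ← h2, ← hcomm, pairProj_apply, if_pos (Or.inl rfl)]

lemma mulVecLin_alg (M : Matrix (Fin n) (Fin n) K) :
    M.mulVecLin = Matrix.toLinAlgEquiv' M := rfl

lemma mulVecLin_conj_pow (A : Matrix (Fin n) (Fin n) K) (μ : K) (k : ℕ) :
    ((A - μ • (1 : Matrix (Fin n) (Fin n) K)) ^ k).mulVecLin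
      = (A.mulVecLin - μ • (1 : Module.End K (Fin n → K))) ^ k := by
  rw [mulVecLin_alg, map_pow, map_sub, _root_.map_smul, _root_.map_one, ← mulVecLin_alg]

lemma charpoly_mulVecLin (A : Matrix (Fin n) (Fin n) K) :
    (A.mulVecLin : Module.End K (Fin n → K)).charpoly = A.charpoly := by
  rw [← LinearMap.charpoly_toMatrix A.mulVecLin (Pi.basisFun K (Fin n))]
  congr 1
  rw [LinearMap.toMatrix_eq_toMatrix']
  rw [show A.mulVecLin = Matrix.toLin' A from rfl, LinearMap.toMatrix'_toLin']

lemma mulVecLin_pow (M : Matrix (Fin n) (Fin n) K) (k : ℕ) :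
    (M ^ k).mulVecLin = M.mulVecLin ^ k := by
  rw [mulVecLin_alg, map_pow, ← mulVecLin_alg]

lemma ker_mulVecLin_conj (P : (Matrix (Fin n) (Fin n) K)ˣ) {M N : Matrix (Fin n) (Fin n) K}
    (h : LinearMap.ker M.mulVecLin = LinearMap.ker N.mulVecLin) :
    LinearMap.ker ((P : Matrix (Fin n) (Fin n) K) * M
        * (↑P⁻¹ : Matrix (Fin n) (Fin n) K)).mulVecLin
      = LinearMap.ker ((P : Matrix (Fin n) (Fin n) K) * N
        * (↑P⁻¹ : Matrix (Fin n) (Fin n) K)).mulVecLin := by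
  set Pm : Matrix (Fin n) (Fin n) K := (P : Matrix (Fin n) (Fin n) K) with hPm
  set Pv : Matrix (Fin n) (Fin n) K := (↑P⁻¹ : Matrix (Fin n) (Fin n) K) with hPv
  have hPvPm : Pv * Pm = 1 := by
    rw [hPm, hPv, ← Units.val_mul, inv_mul_cancel, Units.val_one]
  ext x
  simp only [LinearMap.mem_ker, Matrix.mulVecLin_apply]
  have hinj : ∀ y : Fin n → K, Pm *ᵥ y = 0 ↔ y = 0 := by
    intro y
    constructor
    · intro hy
      have h2 : Pv *ᵥ (Pm *ᵥ y) = 0 := by rw [hy, Matrix.mulVec_zero]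
      rwa [Matrix.mulVec_mulVec, hPvPm, Matrix.one_mulVec] at h2
    · rintro rfl
      simp
  have e : ∀ M' : Matrix (Fin n) (Fin n) K,
      (Pm * M' * Pv) *ᵥ x = Pm *ᵥ (M' *ᵥ (Pv *ᵥ x)) := by
    intro M'
    rw [Matrix.mulVec_mulVec, Matrix.mulVec_mulVec, Matrix.mul_assoc]
  rw [e M, e N, hinj, hinj]
  have h3 := Submodule.ext_iff.mp h (Pv *ᵥ x)
  simpa only [LinearMap.mem_ker, Matrix.mulVecLin_apply] using h3

theorem forward_direction (A : Matrix (Fin n) (Fin n) K) (hA : IsXFormable A) :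
    ∀ lam : K, (Matrix.charpoly A).IsRoot lam →
        LinearMap.ker (Matrix.mulVecLin ((A - lam • (1 : Matrix (Fin n) (Fin n) K)) ^ 2)) =
          LinearMap.ker (Matrix.mulVecLin ((A - lam • (1 : Matrix (Fin n) (Fin n) K)) ^ n)) := by
  obtain ⟨B, hB, P, hP⟩ := hA
  intro lam _
  have hM : IsXForm (B - lam • (1 : Matrix (Fin n) (Fin n) K)) := by
    intro i j h1 h2
    have hne : i ≠ j := fun e => h1 (congrArg Fin.val e)
    rw [Matrix.sub_apply, hB i j h1 h2, Matrix.smul_apply, Matrix.one_apply_ne hne, smul_zero,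
      sub_zero]
  have hconj : A - lam • (1 : Matrix (Fin n) (Fin n) K)
      = (P : Matrix (Fin n) (Fin n) K) * (B - lam • (1 : Matrix (Fin n) (Fin n) K))
        * (↑P⁻¹ : Matrix (Fin n) (Fin n) K) := by
    rw [hP, Matrix.mul_sub, Matrix.sub_mul]
    congr 1
    rw [Matrix.mul_smul, mul_one, Matrix.smul_mul, ← Units.val_mul, mul_inv_cancel,
      Units.val_one]
  have hkerM : LinearMap.ker ((B - lam • (1 : Matrix (Fin n) (Fin n) K)) ^ 2).mulVecLin
      = LinearMap.ker ((B - lam • (1 : Matrix (Fin n) (Fin n) K)) ^ n).mulVecLin := by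
    have hk2 : ∀ i : Fin n, finrank K (pairSub K i) ≤ 2 := finrank_pairSub_le_two
    have hkn : ∀ i : Fin n, finrank K (pairSub K i) ≤ n := fun i =>
      le_trans (Submodule.finrank_le _) (le_of_eq (Module.finrank_fin_fun K))
    ext v
    simp only [LinearMap.mem_ker, mulVecLin_pow]
    exact ⟨fun hv => xform_pow_ker hM hk2 hkn v hv, fun hv => xform_pow_ker hM hkn hk2 v hv⟩
  rw [hconj, Units.conj_pow, Units.conj_pow]
  exact ker_mulVecLin_conj P hkerM

theorem reverse_direction [IsAlgClosed K] (A : Matrix (Fin n) (Fin n) K)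
    (h : ∀ lam : K, (Matrix.charpoly A).IsRoot lam →
        LinearMap.ker (Matrix.mulVecLin ((A - lam • (1 : Matrix (Fin n) (Fin n) K)) ^ 2)) =
          LinearMap.ker (Matrix.mulVecLin ((A - lam • (1 : Matrix (Fin n) (Fin n) K)) ^ n))) :
    IsXFormable A := by
  classical
  set f : Module.End K (Fin n → K) := A.mulVecLin with hf
  have hfinrank : finrank K (Fin n → K) = n := Module.finrank_fin_fun K
  -- non-roots have trivial generalized eigenspace
  have hWbot : ∀ μ : K, ¬ A.charpoly.IsRoot μ → f.maxGenEigenspace μ = ⊥ := by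
    intro μ hμ
    by_contra hne
    have h2 : f.genEigenspace μ (finrank K (Fin n → K)) ≠ ⊥ := by
      rw [← Module.End.maxGenEigenspace_eq_genEigenspace_finrank]
      exact hne
    have h1 : f.HasEigenvalue μ :=
      Module.End.hasEigenvalue_of_hasGenEigenvalue (k := finrank K (Fin n → K)) h2
    have h3 : (minpoly K f).IsRoot μ := Module.End.hasEigenvalue_iff_isRoot.mp h1
    have h4 : minpoly K f ∣ f.charpoly := LinearMap.minpoly_dvd_charpoly f
    rw [_root_.charpoly_mulVecLin] at h4
    exact hμ (h3.dvd h4)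
  -- each generalized eigenspace is killed by the square
  have hW2 : ∀ μ : K,
      f.maxGenEigenspace μ ≤ LinearMap.ker ((f - μ • 1) ^ 2) := by
    intro μ
    by_cases hμ : A.charpoly.IsRoot μ
    · have e1 : f.maxGenEigenspace μ = LinearMap.ker ((f - μ • 1) ^ n) := by
        rw [Module.End.maxGenEigenspace_eq_genEigenspace_finrank, hfinrank]
        exact Module.End.genEigenspace_nat
      rw [e1, ← mulVecLin_conj_pow, ← mulVecLin_conj_pow, ← h μ hμ, mulVecLin_conj_pow]
    · rw [hWbot μ hμ]
      exact bot_le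
  set Λ : Finset K := A.charpoly.roots.toFinset with hΛ
  have hmemΛ : ∀ μ : K, μ ∈ Λ ↔ A.charpoly.IsRoot μ := by
    intro μ
    rw [hΛ, Multiset.mem_toFinset, Polynomial.mem_roots (A.charpoly_monic).ne_zero]
  -- internal direct sum decomposition
  have hInternal : DirectSum.IsInternal (fun μ : Λ => f.maxGenEigenspace (μ : K)) := by
    rw [DirectSum.isInternal_submodule_iff_iSupIndep_and_iSup_eq_top]
    constructor
    · exact (f.independent_maxGenEigenspace).comp Subtype.val_injective
    · rw [eq_top_iff, ← Module.End.iSup_maxGenEigenspace_eq_top f]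
      apply iSup_le
      intro μ
      by_cases hμ : A.charpoly.IsRoot μ
      · exact le_iSup_of_le ⟨μ, (hmemΛ μ).mpr hμ⟩ le_rfl
      · rw [hWbot μ hμ]; exact bot_le
  -- the restricted square-zero endomorphism
  have hmaps : ∀ μ : Λ, ∀ x ∈ f.maxGenEigenspace (μ : K),
      (f - (μ : K) • 1) x ∈ f.maxGenEigenspace (μ : K) := by
    intro μ
    exact Module.End.mapsTo_maxGenEigenspace_of_comm
      (((Commute.refl f).sub_right ((Commute.one_right f).smul_right (μ : K)))) (μ : K)
  set gres := fun μ : Λ => (f - (μ : K) • 1).restrict (hmaps μ) with hgres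
  have hg2 : ∀ μ : Λ, ∀ x, gres μ (gres μ x) = 0 := by
    intro μ x
    apply Subtype.ext
    rw [Submodule.coe_zero, LinearMap.restrict_coe_apply, LinearMap.restrict_coe_apply]
    have hx2 : (((f - (μ : K) • 1) ^ 2 : Module.End K (Fin n → K))) (x : Fin n → K) = 0 :=
      hW2 (μ : K) x.2
    rw [pow_two, Module.End.mul_apply] at hx2
    exact hx2
  choose r s bb hb1 hb2 using fun μ : Λ => sq_zero_basis (gres μ) (hg2 μ)
  set cb := hInternal.collectedBasis bb with hcbdef
  have hcb : ∀ a, cb a = ((bb a.1 a.2 : f.maxGenEigenspace (a.1 : K)) : Fin n → K) := by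
    intro a
    rw [hcbdef, DirectSum.IsInternal.collectedBasis_coe]
  -- action of f on the collected basis
  have p1V : ∀ (μ : Λ) (i : Fin (r μ)),
      f (cb ⟨μ, Sum.inl i⟩) = (μ : K) • cb ⟨μ, Sum.inl i⟩ + cb ⟨μ, Sum.inr (Sum.inl i)⟩ := by
    intro μ i
    have h0 := congrArg (Subtype.val) (hb1 μ i)
    rw [LinearMap.restrict_coe_apply] at h0
    simp only [hcb]
    simp only [LinearMap.sub_apply, LinearMap.smul_apply, Module.End.one_apply] at h0
    show f ((bb μ (Sum.inl i) : f.maxGenEigenspace (μ : K)) : Fin n → K)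
      = (μ : K) • ((bb μ (Sum.inl i) : f.maxGenEigenspace (μ : K)) : Fin n → K)
        + ((bb μ (Sum.inr (Sum.inl i)) : f.maxGenEigenspace (μ : K)) : Fin n → K)
    rw [sub_eq_iff_eq_add.mp h0, add_comm]
  have p2V : ∀ (μ : Λ) (j : Fin (r μ) ⊕ Fin (s μ)),
      f (cb ⟨μ, Sum.inr j⟩) = (μ : K) • cb ⟨μ, Sum.inr j⟩ := by
    intro μ j
    have h0 := congrArg (Subtype.val) (hb2 μ j)
    rw [LinearMap.restrict_coe_apply] at h0
    simp only [hcb]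
    simp only [LinearMap.sub_apply, LinearMap.smul_apply, Module.End.one_apply,
      Submodule.coe_zero] at h0
    show f ((bb μ (Sum.inr j) : f.maxGenEigenspace (μ : K)) : Fin n → K)
      = (μ : K) • ((bb μ (Sum.inr j) : f.maxGenEigenspace (μ : K)) : Fin n → K)
    rw [← sub_eq_zero]
    exact h0
  -- the combinatorial reindexing
  set C := (Σ μ : Λ, Fin (r μ)) with hC
  set S := (Σ μ : Λ, Fin (s μ)) with hS
  set m := Fintype.card C with hm
  set t := Fintype.card S with ht
  let eC : C ≃ Fin m := Fintype.equivFin C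
  let eS : S ≃ Fin t := Fintype.equivFin S
  let eT : (Σ μ : Λ, Fin (r μ) ⊕ (Fin (r μ) ⊕ Fin (s μ))) ≃ (C ⊕ (C ⊕ S)) :=
    (Equiv.sigmaSumDistrib _ _).trans
      ((Equiv.refl C).sumCongr (Equiv.sigmaSumDistrib _ _))
  have hcard : m + (m + t) = n := by
    have h1 : Fintype.card (Σ μ : Λ, Fin (r μ) ⊕ (Fin (r μ) ⊕ Fin (s μ))) = n := by
      rw [← Module.finrank_eq_card_basis cb, hfinrank]
    rw [← h1, Fintype.card_congr eT]
    simp [Fintype.card_sum]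
    rfl
  let χ : C ⊕ (C ⊕ S) → Fin n := fun x =>
    match x with
    | .inl c => ⟨(eC c : ℕ), by have := (eC c).isLt; omega⟩
    | .inr (.inl c) => ⟨n - 1 - (eC c : ℕ), by have := (eC c).isLt; omega⟩
    | .inr (.inr x) => ⟨m + (eS x : ℕ), by have := (eS x).isLt; omega⟩
  have hχ1 : ∀ c, (χ (.inl c) : ℕ) = (eC c : ℕ) := fun c => rfl
  have hχ2 : ∀ c, (χ (.inr (.inl c)) : ℕ) = n - 1 - (eC c : ℕ) := fun c => rfl
  have hχ3 : ∀ x, (χ (.inr (.inr x)) : ℕ) = m + (eS x : ℕ) := fun x => rfl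
  have hχbij : Function.Bijective χ := by
    rw [Fintype.bijective_iff_injective_and_card]
    constructor
    · rintro (c | c | c) (d | d | d) hcd
      · have h' := congrArg Fin.val hcd
        rw [hχ1 c, hχ1 d] at h'
        exact congrArg Sum.inl (eC.injective (Fin.val_injective h'))
      · have h' := congrArg Fin.val hcd
        rw [hχ1 c, hχ2 d] at h'
        exact absurd h' (by have := (eC c).isLt; have := (eC d).isLt; omega)
      · have h' := congrArg Fin.val hcd
        rw [hχ1 c, hχ3 d] at h'
        exact absurd h' (by have := (eC c).isLt; have := (eS d).isLt; omega)
      · have h' := congrArg Fin.val hcd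
        rw [hχ2 c, hχ1 d] at h'
        exact absurd h' (by have := (eC c).isLt; have := (eC d).isLt; omega)
      · have h' := congrArg Fin.val hcd
        rw [hχ2 c, hχ2 d] at h'
        have h'' : (eC c : ℕ) = (eC d : ℕ) := by
          have := (eC c).isLt; have := (eC d).isLt; omega
        exact congrArg (Sum.inr ∘ Sum.inl) (eC.injective (Fin.val_injective h''))
      · have h' := congrArg Fin.val hcd
        rw [hχ2 c, hχ3 d] at h'
        exact absurd h' (by have := (eC c).isLt; have := (eS d).isLt; omega)
      · have h' := congrArg Fin.val hcd
        rw [hχ3 c, hχ1 d] at h'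
        exact absurd h' (by have := (eS c).isLt; have := (eC d).isLt; omega)
      · have h' := congrArg Fin.val hcd
        rw [hχ3 c, hχ2 d] at h'
        exact absurd h' (by have := (eS c).isLt; have := (eC d).isLt; omega)
      · have h' := congrArg Fin.val hcd
        rw [hχ3 c, hχ3 d] at h'
        have h'' : (eS c : ℕ) = (eS d : ℕ) := by omega
        exact congrArg (Sum.inr ∘ Sum.inr) (eS.injective (Fin.val_injective h''))
    · simp only [Fintype.card_sum, Fintype.card_fin]; exact hcard
  let ε : (Σ μ : Λ, Fin (r μ) ⊕ (Fin (r μ) ⊕ Fin (s μ))) ≃ Fin n :=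
    eT.trans (Equiv.ofBijective χ hχbij)
  have hε1 : ∀ (μ : Λ) (i : Fin (r μ)), ε ⟨μ, Sum.inl i⟩ = χ (.inl ⟨μ, i⟩) := fun μ i => rfl
  have hε2 : ∀ (μ : Λ) (i : Fin (r μ)),
      ε ⟨μ, Sum.inr (Sum.inl i)⟩ = χ (.inr (.inl ⟨μ, i⟩)) := fun μ i => rfl
  have hε3 : ∀ (μ : Λ) (j : Fin (s μ)),
      ε ⟨μ, Sum.inr (Sum.inr j)⟩ = χ (.inr (.inr ⟨μ, j⟩)) := fun μ j => rfl
  have hrev : ∀ (μ : Λ) (i : Fin (r μ)),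
      ε ⟨μ, Sum.inr (Sum.inl i)⟩ = Fin.rev (ε ⟨μ, Sum.inl i⟩) := by
    intro μ i
    rw [hε1, hε2]
    apply Fin.ext
    rw [Fin.val_rev, hχ2, hχ1]
    have := (eC ⟨μ, i⟩).isLt
    omega
  set bfin := cb.reindex ε with hbfin
  have hbfin_apply : ∀ a, bfin (ε a) = cb a := by
    intro a
    rw [hbfin, Basis.reindex_apply, Equiv.symm_apply_apply]
  -- the key structural property
  have hprop : ∀ j : Fin n,
      (∃ μ : K, f (bfin j) = μ • bfin j) ∨
      (∃ μ : K, f (bfin j) = μ • bfin j + bfin (Fin.rev j)) := by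
    intro j
    have hj : ε (ε.symm j) = j := ε.apply_symm_apply j
    rcases hτ : ε.symm j with ⟨μ, i | i | i⟩ <;> rw [hτ] at hj <;> rw [← hj]
    · right
      exact ⟨(μ : K), by rw [← hrev μ i, hbfin_apply ⟨μ, Sum.inl i⟩, hbfin_apply ⟨μ, Sum.inr (Sum.inl i)⟩]; exact p1V μ i⟩
    · exact Or.inl ⟨(μ : K), by rw [hbfin_apply]; exact p2V μ (Sum.inl i)⟩
    · exact Or.inl ⟨(μ : K), by rw [hbfin_apply]; exact p2V μ (Sum.inr i)⟩
  -- the X-form matrix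
  set B : Matrix (Fin n) (Fin n) K := Matrix.of (fun i j => bfin.repr (f (bfin j)) i) with hB
  have hBX : IsXForm B := by
    intro i j h1 h2
    have hij : j ≠ i := fun e => h1 (congrArg Fin.val e).symm
    have hijr : Fin.rev j ≠ i := by
      intro e
      apply h2
      have := congrArg Fin.val e
      rw [Fin.val_rev] at this
      have := j.isLt
      omega
    show bfin.repr (f (bfin j)) i = 0
    rcases hprop j with ⟨μ, hμ⟩ | ⟨μ, hμ⟩ <;> rw [hμ] <;>
      simp [Basis.repr_self, Finsupp.single_apply, hij, hijr]
  -- similarity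
  have hBf : B = LinearMap.toMatrix bfin bfin f := by
    ext i j
    rw [LinearMap.toMatrix_apply]
    rfl
  set std := Pi.basisFun K (Fin n) with hstd
  refine ⟨B, hBX, ⟨std.toMatrix bfin, bfin.toMatrix std,
    std.toMatrix_mul_toMatrix_flip bfin, bfin.toMatrix_mul_toMatrix_flip std⟩, ?_⟩
  show A = std.toMatrix bfin * B * bfin.toMatrix std
  rw [hBf, basis_toMatrix_mul_linearMap_toMatrix_mul_basis_toMatrix, hstd,
    LinearMap.toMatrix_eq_toMatrix']
  rw [show f = Matrix.toLin' A from rfl, LinearMap.toMatrix'_toLin']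

end Aux

/-- Over an algebraically closed field, a matrix is X-formable iff all Jordan blocks
in its Jordan normal form have size `1` or `2`, i.e. for every eigenvalue `λ` of `A`
the kernel of `(A - λI)²` equals the kernel of `(A - λI)ⁿ` (the generalized eigenspace). -/
theorem xformable_iff_gen_eigenspace {K : Type*} [Field K] [IsAlgClosed K]
    {n : ℕ} (A : Matrix (Fin n) (Fin n) K) :
    IsXFormable A ↔
      ∀ lam : K, (Matrix.charpoly A).IsRoot lam →
        LinearMap.ker (Matrix.mulVecLin ((A - lam • (1 : Matrix (Fin n) (Fin n) K)) ^ 2)) =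
          LinearMap.ker (Matrix.mulVecLin ((A - lam • (1 : Matrix (Fin n) (Fin n) K)) ^ n)) := by
  exact ⟨forward_direction A, reverse_direction A⟩
end

section
/- For every n ≥ 1, the set of complex polynomials of degree exactly n all of whose roots are simple or double (every root has multiplicity at most 2) is an open subset of the space ℂ_n[X] of complex polynomials of degree at most n, where ℂ_n[X] is equipped with the sup-norm on coefficients ‖∑ a_k X^k‖_∞ = max_k |a_k|. -/
open Polynomial

/-- The polynomial `∑ aₖ Xᵏ` associated to the coefficient vector `a`; the space
`𝕂ₙ[X]` of polynomials of degree at most `n` is identified with the coefficient space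
`Fin (n+1) → 𝕂`, whose product topology coincides with the sup-norm topology. -/
noncomputable def polyOf {K : Type*} [Semiring K] {n : ℕ} (a : Fin (n + 1) → K) :
    Polynomial K :=
  ∑ k : Fin (n + 1), Polynomial.C (a k) * Polynomial.X ^ (k : ℕ)

lemma eval_iter_polyOf {n : ℕ} (m : ℕ) (a : Fin (n + 1) → ℂ) (z : ℂ) :
    (Polynomial.derivative^[m] (polyOf a)).eval z
      = ∑ k : Fin (n + 1), a k * (((k : ℕ).descFactorial m : ℂ) * z ^ ((k : ℕ) - m)) := by
  unfold polyOf
  rw [Polynomial.iterate_derivative_sum]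
  simp [Polynomial.iterate_derivative_C_mul, Polynomial.iterate_derivative_X_pow_eq_natCast_mul,
    Polynomial.eval_finset_sum, mul_assoc]

lemma cont_eval_iter_polyOf {n : ℕ} (m : ℕ) :
    Continuous fun p : (Fin (n + 1) → ℂ) × ℂ =>
      (Polynomial.derivative^[m] (polyOf p.1)).eval p.2 := by
  have : (fun p : (Fin (n + 1) → ℂ) × ℂ =>
      (Polynomial.derivative^[m] (polyOf p.1)).eval p.2)
      = fun p => ∑ k : Fin (n + 1), p.1 k * (((k : ℕ).descFactorial m : ℂ) * p.2 ^ ((k : ℕ) - m)) := by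
    funext p; exact eval_iter_polyOf m p.1 p.2
  rw [this]
  exact continuous_finset_sum _ fun k _ =>
    (((continuous_apply k).comp continuous_fst).mul
      (continuous_const.mul (continuous_snd.pow _)))

lemma coeff_polyOf {n : ℕ} (a : Fin (n + 1) → ℂ) (k : Fin (n + 1)) :
    (polyOf a).coeff (k : ℕ) = a k := by
  unfold polyOf
  rw [Polynomial.finset_sum_coeff]
  simp only [Polynomial.coeff_C_mul, Polynomial.coeff_X_pow]
  rw [Finset.sum_eq_single k]
  · simp
  · intro b _ hb
    have : (b : ℕ) ≠ (k : ℕ) := fun h => hb (Fin.ext h)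
    rw [if_neg (Ne.symm this), mul_zero]
  · simp

lemma degree_polyOf_le {n : ℕ} (a : Fin (n + 1) → ℂ) : (polyOf a).degree ≤ (n : ℕ) := by
  unfold polyOf
  refine (Polynomial.degree_sum_le _ _).trans ?_
  simp only [Finset.sup_le_iff]
  intro k _
  refine (Polynomial.degree_C_mul_X_pow_le _ _).trans ?_
  exact_mod_cast Nat.cast_le.mpr (Nat.lt_succ_iff.mp k.isLt)

lemma root_bound {n : ℕ} (hn : 1 ≤ n) (a : Fin (n + 1) → ℂ) (z : ℂ)
    (hz : (polyOf a).eval z = 0) (h1 : 1 ≤ ‖z‖) :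
    ‖a (Fin.last n)‖ * ‖z‖ ≤ ∑ k : Fin (n + 1), ‖a k‖ := by
  have he : ∑ k : Fin (n + 1), a k * z ^ (k : ℕ) = 0 := by
    have := eval_iter_polyOf 0 a z
    simpa [hz] using this.symm
  have hmem : Fin.last n ∈ (Finset.univ : Finset (Fin (n + 1))) := Finset.mem_univ _
  rw [← Finset.add_sum_erase _ _ hmem] at he
  have hne : a (Fin.last n) * z ^ n = -∑ k ∈ Finset.univ.erase (Fin.last n), a k * z ^ (k : ℕ) := by
    simp only [Fin.val_last] at he
    linear_combination he
  have hzpos : (0:ℝ) < ‖z‖ ^ (n - 1) := pow_pos (lt_of_lt_of_le one_pos h1) _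
  have key : ‖a (Fin.last n)‖ * ‖z‖ ^ n ≤ (∑ k : Fin (n + 1), ‖a k‖) * ‖z‖ ^ (n - 1) := by
    calc ‖a (Fin.last n)‖ * ‖z‖ ^ n = ‖a (Fin.last n) * z ^ n‖ := by
          rw [norm_mul, norm_pow]
      _ = ‖∑ k ∈ Finset.univ.erase (Fin.last n), a k * z ^ (k : ℕ)‖ := by rw [hne, norm_neg]
      _ ≤ ∑ k ∈ Finset.univ.erase (Fin.last n), ‖a k * z ^ (k : ℕ)‖ := norm_sum_le _ _
      _ ≤ ∑ k ∈ Finset.univ.erase (Fin.last n), ‖a k‖ * ‖z‖ ^ (n - 1) := by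
          refine Finset.sum_le_sum fun k hk => ?_
          rw [norm_mul, norm_pow]
          refine mul_le_mul_of_nonneg_left ?_ (norm_nonneg _)
          refine pow_le_pow_right₀ h1 ?_
          have : (k : ℕ) ≠ n := by
            intro h; exact (Finset.mem_erase.mp hk).1 (Fin.ext (by simp [h]))
          omega
      _ ≤ (∑ k : Fin (n + 1), ‖a k‖) * ‖z‖ ^ (n - 1) := by
          rw [Finset.sum_mul]
          exact Finset.sum_le_sum_of_subset_of_nonneg (Finset.erase_subset _ _)
            (fun k _ _ => mul_nonneg (norm_nonneg _) (le_of_lt hzpos))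
  have hpow : ‖z‖ ^ n = ‖z‖ ^ (n - 1) * ‖z‖ := by
    rw [← pow_succ]; congr 1; omega
  rw [hpow, ← mul_assoc] at key
  have key2 : (‖a (Fin.last n)‖ * ‖z‖) * ‖z‖ ^ (n - 1) ≤
      (∑ k : Fin (n + 1), ‖a k‖) * ‖z‖ ^ (n - 1) := by
    calc (‖a (Fin.last n)‖ * ‖z‖) * ‖z‖ ^ (n - 1)
        = ‖a (Fin.last n)‖ * ‖z‖ ^ (n - 1) * ‖z‖ := by ring
      _ ≤ _ := key
  exact le_of_mul_le_mul_right key2 hzpos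


/-- The set of complex polynomials of degree exactly `n` whose roots are all simple or
double is open in `ℂₙ[X]`. -/
theorem isOpen_simple_or_double_roots (n : ℕ) (hn : 1 ≤ n) :
    IsOpen {a : Fin (n + 1) → ℂ |
      (polyOf a).degree = (n : ℕ) ∧
      ∀ z : ℂ, (polyOf a).rootMultiplicity z ≤ 2} := by
  rw [isOpen_iff_forall_mem_open]
  rintro a₀ ⟨hdeg₀, hmult₀⟩
  have hp₀ne : polyOf a₀ ≠ 0 := by
    intro h
    rw [h, Polynomial.degree_zero] at hdeg₀
    exact (WithBot.bot_ne_coe (a := n)) hdeg₀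
  have hc₀ : a₀ (Fin.last n) ≠ 0 := by
    have h1 := Polynomial.coeff_ne_zero_of_eq_degree hdeg₀
    have h2 := coeff_polyOf a₀ (Fin.last n)
    rw [Fin.val_last] at h2
    rw [h2] at h1
    exact h1
  have hcpos : (0:ℝ) < ‖a₀ (Fin.last n)‖ := norm_pos_iff.mpr hc₀
  set R : ℝ := (∑ k : Fin (n + 1), ‖a₀ k‖) / ‖a₀ (Fin.last n)‖ + 1 with hR
  have hR1 : (1:ℝ) ≤ R := by
    rw [hR]
    have : (0:ℝ) ≤ (∑ k : Fin (n + 1), ‖a₀ k‖) / ‖a₀ (Fin.last n)‖ :=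
      div_nonneg (Finset.sum_nonneg fun _ _ => norm_nonneg _) hcpos.le
    linarith
  -- the three open conditions
  set K : Set ℂ := Metric.closedBall 0 R with hK
  have hKc : IsCompact K := isCompact_closedBall 0 R
  haveI : CompactSpace K := isCompact_iff_compactSpace.mp hKc
  set C : Set ((Fin (n + 1) → ℂ) × K) :=
    ⋂ (m : ℕ) (_ : m ≤ 2),
      {p | (Polynomial.derivative^[m] (polyOf p.1)).eval (p.2 : ℂ) = 0} with hC
  have hCclosed : IsClosed C := by
    refine isClosed_iInter fun m => isClosed_iInter fun _ => isClosed_eq ?_ continuous_const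
    exact (cont_eval_iter_polyOf m).comp
      (continuous_fst.prodMk (continuous_subtype_val.comp continuous_snd))
  have hBad : IsClosed (Prod.fst '' C) := isClosedMap_fst_of_compactSpace C hCclosed
  set O : Set (Fin (n + 1) → ℂ) :=
    {a | a (Fin.last n) ≠ 0} ∩
    {a | ∑ k : Fin (n + 1), ‖a k‖ < ‖a (Fin.last n)‖ * R} ∩
    (Prod.fst '' C)ᶜ with hO
  refine ⟨O, ?_, ?_, ⟨hc₀, ?_⟩, ?_⟩
  · -- O ⊆ S
    rintro a ⟨⟨ha1, ha2⟩, ha3⟩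
    have hcoeff : (polyOf a).coeff n = a (Fin.last n) := by
      have h2 := coeff_polyOf a (Fin.last n)
      rwa [Fin.val_last] at h2
    have hdeg : (polyOf a).degree = (n : ℕ) :=
      le_antisymm (degree_polyOf_le a)
        (Polynomial.le_degree_of_ne_zero (by rwa [hcoeff]))
    have hpne : polyOf a ≠ 0 := by
      intro h
      rw [h, Polynomial.coeff_zero] at hcoeff
      exact ha1 hcoeff.symm
    refine ⟨hdeg, fun z => ?_⟩
    by_contra hlt
    push_neg at hlt
    have hroot : ∀ m ≤ 2, (Polynomial.derivative^[m] (polyOf a)).eval z = 0 := by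
      intro m hm
      exact Polynomial.isRoot_iterate_derivative_of_lt_rootMultiplicity (hm.trans_lt hlt)
    have hev : (polyOf a).eval z = 0 := by simpa using hroot 0 (by omega)
    have hzR : ‖z‖ ≤ R := by
      by_cases h1 : 1 ≤ ‖z‖
      · have := root_bound hn a z hev h1
        have h2 : ‖a (Fin.last n)‖ * ‖z‖ < ‖a (Fin.last n)‖ * R := lt_of_le_of_lt this ha2
        exact le_of_lt ((mul_lt_mul_iff_right₀ (norm_pos_iff.mpr ha1)).mp h2)
      · push_neg at h1; linarith
    have hzK : z ∈ K := by
      rw [hK, Metric.mem_closedBall, dist_zero_right]; exact hzR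
    refine ha3 (Set.mem_image_of_mem Prod.fst (x := ((a, ⟨z, hzK⟩) : _ × K)) ?_)
    simp only [hC, Set.mem_iInter, Set.mem_setOf_eq]
    exact fun m hm => hroot m hm
  · -- O open
    refine ((isOpen_ne_fun (continuous_apply _) continuous_const).inter
      (isOpen_lt (continuous_finset_sum _ fun k _ => (continuous_apply k).norm)
        (((continuous_apply _).norm).mul continuous_const))).inter hBad.isOpen_compl
  · show ∑ k : Fin (n + 1), ‖a₀ k‖ < ‖a₀ (Fin.last n)‖ * R
    rw [hR]
    have := mul_div_cancel₀ (∑ k : Fin (n + 1), ‖a₀ k‖) hcpos.ne'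
    nlinarith [hcpos]
  · -- a₀ ∉ Bad
    intro hbad
    obtain ⟨p, hmem, heq⟩ := hbad
    simp only [hC, Set.mem_iInter, Set.mem_setOf_eq] at hmem
    rw [heq] at hmem
    have h2lt : 2 < (polyOf a₀).rootMultiplicity (p.2 : ℂ) :=
      Polynomial.lt_rootMultiplicity_of_isRoot_iterate_derivative hp₀ne
        (fun m hm => hmem m hm)
    exact absurd (hmult₀ (p.2 : ℂ)) (by omega)
end

section
/- For every n ≥ 1, the set of real polynomials of degree exactly n that verify property (P) is an open subset of the space ℝ_n[X] of real polynomials of degree at most n, where ℝ_n[X] is equipped with the sup-norm on coefficients ‖∑ a_k X^k‖_∞ = max_k |a_k|. -/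
open Polynomial Filter Topology


/-- A polynomial verifies property (𝒫) if it is a product of pairwise distinct monic
irreducible quadratics and of powers `(X - λᵢ)^{nᵢ}` with the `λᵢ` pairwise distinct
and `1 ≤ nᵢ ≤ 2`. -/
def VerifiesP {K : Type*} [Field K] (p : Polynomial K) : Prop :=
  ∃ (r q : ℕ) (P : Fin r → Polynomial K) (lam : Fin q → K) (m : Fin q → ℕ),
    (∀ i, (P i).Monic ∧ Irreducible (P i) ∧ (P i).natDegree = 2) ∧
    Function.Injective P ∧ Function.Injective lam ∧
    (∀ i, 1 ≤ m i ∧ m i ≤ 2) ∧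
    p = (∏ i, P i) * ∏ i, (X - C (lam i)) ^ (m i)

noncomputable section AuxVP

namespace AuxVP

def Dsc (d : Polynomial ℝ) : ℝ := d.coeff 1 ^ 2 - 4 * d.coeff 0

def Bad (p : Polynomial ℝ) : Prop :=
  ∃ d : Polynomial ℝ, d.Monic ∧
    ((d.natDegree = 1 ∧ d ^ 2 ∣ p ∧ d ∣ derivative (derivative p)) ∨
     (d.natDegree = 2 ∧ Dsc d ≤ 0 ∧ d ^ 2 ∣ p))

lemma monic_quad_eq {p : Polynomial ℝ} (hm : p.Monic) (h2 : p.natDegree = 2) :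
    p = X ^ 2 + C (p.coeff 1) * X + C (p.coeff 0) := by
  have h3 : ∀ j, 2 < j → p.coeff j = 0 := fun j hj =>
    coeff_eq_zero_of_natDegree_lt (h2 ▸ hj)
  have hc2 : p.coeff 2 = 1 := by
    have h := hm.coeff_natDegree; rwa [h2] at h
  ext j
  match j with
  | 0 => simp
  | 1 => simp
  | 2 => simp [hc2, coeff_X_pow]
  | (j+3) =>
    have h0 := h3 (j+3) (by omega)
    simp [h0, coeff_X_pow, (by omega : ¬ (j+3 = 2)), (by omega : ¬ (j+3 = 1)),
      (by omega : ¬ (j+3 = 0))]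

lemma lin_degree_lt (s t : ℝ) : (C s * X + C t : Polynomial ℝ).degree < 2 :=
  lt_of_le_of_lt degree_linear_le (by norm_num)

lemma quad_coeff (s t : ℝ) :
    (X ^ 2 + C s * X + C t : Polynomial ℝ).coeff 1 = s ∧
    (X ^ 2 + C s * X + C t : Polynomial ℝ).coeff 0 = t := by
  constructor <;> simp [coeff_X_pow]

lemma quad_monic (s t : ℝ) : (X ^ 2 + C s * X + C t : Polynomial ℝ).Monic := by
  have := monic_X_pow_add (n := 2) (p := C s * X + C t) (lin_degree_lt s t)
  simpa [add_assoc] using this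

lemma quad_natDegree (s t : ℝ) : (X ^ 2 + C s * X + C t : Polynomial ℝ).natDegree = 2 := by
  have h : (X ^ 2 + C s * X + C t : Polynomial ℝ).degree = 2 := by
    rw [add_assoc, degree_add_eq_left_of_degree_lt (by rw [degree_X_pow]; exact_mod_cast lin_degree_lt s t),
      degree_X_pow]
    norm_cast
  exact natDegree_eq_of_degree_eq_some h

lemma X_sub_C_dvd_X_sub_C {a b : ℝ} (h : (X - C a : Polynomial ℝ) ∣ (X - C b)) : a = b := by
  have h2 := (dvd_iff_isRoot).1 h
  simp [IsRoot] at h2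
  linarith

lemma not_X_sub_C_dvd {P : Polynomial ℝ} (hirr : Irreducible P) (h2 : P.natDegree = 2) (x : ℝ) :
    ¬ (X - C x) ∣ P := by
  rintro ⟨g, hg⟩
  have hg0 : g ≠ 0 := by
    rintro rfl
    rw [mul_zero] at hg; rw [hg] at h2; simp at h2
  have hdeg : g.natDegree = 1 := by
    have h := natDegree_mul (X_sub_C_ne_zero x) hg0
    rw [← hg, h2, natDegree_X_sub_C] at h; omega
  rcases hirr.isUnit_or_isUnit hg with hu | hu
  · exact not_isUnit_X_sub_C x hu
  · exact not_isUnit_of_natDegree_pos g (by omega) hu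

lemma exists_root_of_dsc_nonneg {p : Polynomial ℝ} (hm : p.Monic) (h2 : p.natDegree = 2)
    (hd : 0 ≤ Dsc p) : ∃ x, p.IsRoot x := by
  set b := p.coeff 1 with hb
  set c := p.coeff 0 with hc
  have hs : Real.sqrt (b ^ 2 - 4 * c) ^ 2 = b ^ 2 - 4 * c := Real.sq_sqrt hd
  refine ⟨(-b + Real.sqrt (b ^ 2 - 4 * c)) / 2, ?_⟩
  have hrep := monic_quad_eq hm h2
  rw [IsRoot, hrep]
  simp only [eval_add, eval_mul, eval_pow, eval_X, eval_C, ← hb, ← hc]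
  linear_combination hs / 4

lemma dsc_nonpos_of_irreducible {p : Polynomial ℝ} (hm : p.Monic) (h2 : p.natDegree = 2)
    (hirr : Irreducible p) : Dsc p ≤ 0 := by
  by_contra hpos
  push_neg at hpos
  obtain ⟨x, hx⟩ := exists_root_of_dsc_nonneg hm h2 hpos.le
  exact not_X_sub_C_dvd hirr h2 x (dvd_iff_isRoot.2 hx)

lemma pow_dvd_derivative {c : ℝ} {k : ℕ} {p : Polynomial ℝ}
    (h : (X + C c) ^ (k+1) ∣ p) : (X + C c) ^ k ∣ derivative p := by
  obtain ⟨u, rfl⟩ := h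
  rw [derivative_mul, derivative_pow, derivative_X_add_C]
  refine dvd_add ?_ ((pow_dvd_pow _ (Nat.le_succ k)).mul_right _)
  have h1 : (X + C c) ^ k ∣ C (((k+1: ℕ)) : ℝ) * (X + C c) ^ (k + 1 - 1) := by
    simpa using (dvd_mul_left ((X + C c : Polynomial ℝ) ^ k) (C (((k+1: ℕ)) : ℝ)))
  exact (h1.mul_right 1).mul_right u

lemma sq_dvd_of_isRoot {p : Polynomial ℝ} {x : ℝ} (h0 : p.IsRoot x)
    (h1 : p.derivative.IsRoot x) : (X - C x) ^ 2 ∣ p := by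
  have h := (mul_divByMonic_eq_iff_isRoot (p := p) (a := x)).2 h0
  set q := p /ₘ (X - C x) with hq
  have hq' : derivative p = q + (X - C x) * derivative q := by
    conv_lhs => rw [← h]
    rw [derivative_mul, derivative_X_sub_C]
    ring
  have hrq : q.IsRoot x := by
    have h2 := h1
    rw [IsRoot, hq', eval_add, eval_mul] at h2
    simpa using h2
  obtain ⟨r, hr⟩ := dvd_iff_isRoot.2 hrq
  refine ⟨r, ?_⟩
  rw [← h, hr]; ring

lemma isRoot_of_sq_dvd {p : Polynomial ℝ} {x : ℝ} (h : (X - C x) ^ 2 ∣ p) :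
    p.IsRoot x ∧ p.derivative.IsRoot x := by
  obtain ⟨u, rfl⟩ := h
  constructor
  · simp [IsRoot]
  · rw [derivative_mul, derivative_pow, derivative_X_sub_C]
    simp [IsRoot]

lemma linear_pow_dvd_le {q : ℕ} {lam : Fin q → ℝ} (hinj : Function.Injective lam)
    {m : Fin q → ℕ} (hm : ∀ i, m i ≤ 2) {x : ℝ} {k : ℕ}
    (h : (X - C x) ^ k ∣ ∏ i, (X - C (lam i)) ^ m i) : k ≤ 2 := by
  by_contra hk
  push_neg at hk
  have hprime : Prime (X - C x : Polynomial ℝ) := prime_X_sub_C x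
  by_cases hx : ∃ i, lam i = x
  · obtain ⟨i0, rfl⟩ := hx
    rw [← Finset.mul_prod_erase Finset.univ _ (Finset.mem_univ i0)] at h
    have hnd : ¬ (X - C (lam i0)) ∣ ∏ i ∈ Finset.univ.erase i0, (X - C (lam i)) ^ m i := by
      intro hd
      obtain ⟨j, hj, hdj⟩ := hprime.exists_mem_finset_dvd hd
      have hij : lam i0 = lam j := X_sub_C_dvd_X_sub_C (hprime.dvd_of_dvd_pow hdj)
      exact (Finset.ne_of_mem_erase hj) (hinj hij).symm
    have h3 : (X - C (lam i0)) ^ k ∣ (X - C (lam i0)) ^ m i0 :=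
      hprime.pow_dvd_of_dvd_mul_right k hnd h
    have := (pow_dvd_pow_iff (X_sub_C_ne_zero _) hprime.not_unit).1 h3
    have := hm i0
    omega
  · have h1 : (X - C x) ∣ ∏ i, (X - C (lam i)) ^ m i :=
      (dvd_pow_self _ (by omega : k ≠ 0)).trans h
    obtain ⟨j, _, hdj⟩ := hprime.exists_mem_finset_dvd h1
    exact hx ⟨j, (X_sub_C_dvd_X_sub_C (hprime.dvd_of_dvd_pow hdj)).symm⟩

lemma root_of_natDegree_eq_one {u : Polynomial ℝ} (h1 : u.natDegree = 1) :
    ∃ x, u.IsRoot x := by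
  have hu0 : u ≠ 0 := fun h => by simp [h] at h1
  have hu1 : u.coeff 1 ≠ 0 := by
    have h := mt leadingCoeff_eq_zero.1 hu0
    rwa [leadingCoeff, h1] at h
  refine ⟨-(u.coeff 0) / u.coeff 1, ?_⟩
  have hrep := eq_X_add_C_of_natDegree_le_one (le_of_eq h1)
  rw [IsRoot, hrep]
  simp only [eval_add, eval_mul, eval_X, eval_C]
  have hc0 : (C (u.coeff 1) * X + C (u.coeff 0)).coeff 0 = u.coeff 0 := by simp
  have hc1 : (C (u.coeff 1) * X + C (u.coeff 0)).coeff 1 = u.coeff 1 := by simp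
  rw [hc0, hc1]
  field_simp
  ring

lemma notBad_of_verifiesP {p : Polynomial ℝ} (h : VerifiesP p) : ¬ Bad p := by
  obtain ⟨r, q, P, lam, m, hP, hPinj, hlinj, hm, rfl⟩ := h
  set A := ∏ i, P i with hA
  set B := ∏ i, (X - C (lam i)) ^ m i with hB
  have hnA : ∀ x : ℝ, ¬ (X - C x) ∣ A := by
    intro x hdA
    obtain ⟨i, _, hi⟩ := (prime_X_sub_C x).exists_mem_finset_dvd hdA
    exact not_X_sub_C_dvd (hP i).2.1 (hP i).2.2 x hi
  rintro ⟨d, hdm, hcase⟩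
  rcases hcase with ⟨h1, hdvd, hdd⟩ | ⟨h2, hdsc, hdvd⟩
  · -- linear case
    set x := -(d.coeff 0) with hx
    have hd_eq : d = X - C x := by
      rw [hx, map_neg, sub_neg_eq_add]
      exact hdm.eq_X_add_C h1
    have hd' : derivative d = 1 := by rw [hd_eq]; exact derivative_X_sub_C x
    obtain ⟨s, hs⟩ := hdvd
    have h2s : d ∣ C 2 * s := by
      have hkey : C 2 * s = derivative (derivative (d ^ 2 * s)) -
          d * (C 2 * derivative s + C 2 * derivative s + d * derivative (derivative s)) := by
        simp only [derivative_add, derivative_mul, derivative_pow, derivative_C, hd', derivative_one, C_1]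
        push_cast
        simp only [map_one]
        ring
      rw [hkey]
      exact dvd_sub (hs ▸ hdd) (dvd_mul_right _ _)
    have hds : d ∣ s := by
      obtain ⟨w, hw⟩ := h2s
      refine ⟨C (1/2) * w, ?_⟩
      have h' : C (1/2 : ℝ) * (C 2 * s) = C (1/2 : ℝ) * (d * w) := by rw [hw]
      rw [← mul_assoc, ← C_mul] at h'
      norm_num at h'
      rw [h']
      ring
    have h3 : d ^ 3 ∣ A * B := by
      obtain ⟨t, rfl⟩ := hds
      exact ⟨t, by rw [hs]; ring⟩
    rw [hd_eq] at h3
    have hBdvd : (X - C x) ^ 3 ∣ B := (prime_X_sub_C x).pow_dvd_of_dvd_mul_left 3 (hnA x) h3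
    have := linear_pow_dvd_le hlinj (fun i => (hm i).2) hBdvd
    omega
  · -- quadratic case
    by_cases hirr : Irreducible d
    · have hprime : Prime d := hirr.prime
      have hnB : ¬ d ∣ B := by
        intro hdB
        obtain ⟨i, _, hi⟩ := hprime.exists_mem_finset_dvd hdB
        have hle := natDegree_le_of_dvd (hprime.dvd_of_dvd_pow hi) (X_sub_C_ne_zero (lam i))
        rw [h2, natDegree_X_sub_C] at hle
        omega
      have hA2 : d ^ 2 ∣ A := hprime.pow_dvd_of_dvd_mul_right 2 hnB hdvd
      have hdA : d ∣ A := (dvd_pow_self d two_ne_zero).trans hA2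
      obtain ⟨i0, _, hi0⟩ := hprime.exists_mem_finset_dvd hdA
      have hdP : d = P i0 :=
        eq_of_monic_of_associated hdm (hP i0).1 (hirr.associated_of_dvd (hP i0).2.1 hi0)
      rw [hA, ← Finset.mul_prod_erase Finset.univ _ (Finset.mem_univ i0)] at hA2
      have hrest : d ∣ ∏ i ∈ Finset.univ.erase i0, P i := by
        obtain ⟨kk, hkk⟩ := hA2
        rw [← hdP] at hkk
        refine ⟨kk, mul_left_cancel₀ hdm.ne_zero ?_⟩
        rw [hkk]; ring
      obtain ⟨j, hj, hji⟩ := hprime.exists_mem_finset_dvd hrest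
      have hdPj : d = P j :=
        eq_of_monic_of_associated hdm (hP j).1 (hirr.associated_of_dvd (hP j).2.1 hji)
      exact (Finset.ne_of_mem_erase hj) (hPinj (hdPj.symm.trans hdP))
    · -- reducible quadratic with nonpositive discriminant: (X - C α)^2
      have hdnu : ¬ IsUnit d := not_isUnit_of_natDegree_pos d (by omega)
      obtain ⟨u, v, huv, hu, hv⟩ : ∃ u v, d = u * v ∧ ¬IsUnit u ∧ ¬IsUnit v := by
        by_contra hno
        push_neg at hno
        exact hirr ⟨hdnu, fun u v huv => or_iff_not_imp_left.2 (hno u v huv)⟩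
      have hu0 : u ≠ 0 := fun h => hdm.ne_zero (by rw [huv, h, zero_mul])
      have hv0 : v ≠ 0 := fun h => hdm.ne_zero (by rw [huv, h, mul_zero])
      have hsum : u.natDegree + v.natDegree = 2 := by
        have := natDegree_mul hu0 hv0
        rw [← huv, h2] at this
        omega
      have hu1 : u.natDegree = 1 := by
        rcases Nat.lt_or_ge u.natDegree 1 with hlt | hge
        · exfalso
          have h0 : u.natDegree = 0 := by omega
          have := eq_C_of_natDegree_eq_zero h0
          have hne : u.coeff 0 ≠ 0 := fun hc => hu0 (by rw [this, hc, map_zero])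
          exact hu (this ▸ isUnit_C.2 (Ne.isUnit hne))
        · rcases Nat.lt_or_ge v.natDegree 1 with hlt' | hge'
          · exfalso
            have h0 : v.natDegree = 0 := by omega
            have := eq_C_of_natDegree_eq_zero h0
            have hne : v.coeff 0 ≠ 0 := fun hc => hv0 (by rw [this, hc, map_zero])
            exact hv (this ▸ isUnit_C.2 (Ne.isUnit hne))
          · omega
      obtain ⟨α, hαu⟩ := root_of_natDegree_eq_one hu1
      have hα : d.IsRoot α := by
        rw [IsRoot, huv, eval_mul, hαu, zero_mul]
      obtain ⟨g, hg⟩ := dvd_iff_isRoot.2 hα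
      have hg0 : g ≠ 0 := fun h => hdm.ne_zero (by rw [hg, h, mul_zero])
      have hgdeg : g.natDegree = 1 := by
        have h := natDegree_mul (X_sub_C_ne_zero α) hg0
        rw [← hg, h2, natDegree_X_sub_C] at h
        omega
      have hgmon : g.Monic := (monic_X_sub_C α).of_mul_monic_left (hg ▸ hdm)
      set β := -(g.coeff 0) with hβ
      have hd_eq : d = (X - C α) * (X - C β) := by
        rw [hg, hβ, map_neg, sub_neg_eq_add, ← hgmon.eq_X_add_C hgdeg]
      have hexp : d = X ^ 2 + C (-(α + β)) * X + C (α * β) := by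
        rw [hd_eq]
        simp only [map_neg, map_add, map_mul]
        ring
      have hdsc' : Dsc d = (α - β) ^ 2 := by
        rw [Dsc, hexp]
        rw [(quad_coeff _ _).1, (quad_coeff _ _).2]
        ring
      have hαβ : α = β := by
        have h0 : (α - β) ^ 2 = 0 := le_antisymm (hdsc' ▸ hdsc) (sq_nonneg _)
        have := pow_eq_zero_iff (n := 2) (by norm_num) |>.1 h0
        linarith [sub_eq_zero.1 this]
      have h4 : (X - C α) ^ 4 ∣ A * B := by
        obtain ⟨kk, hkk⟩ := hdvd
        refine ⟨kk, ?_⟩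
        rw [hkk, hd_eq, ← hαβ]
        ring
      have hBdvd : (X - C α) ^ 4 ∣ B := (prime_X_sub_C α).pow_dvd_of_dvd_mul_left 4 (hnA α) h4
      have := linear_pow_dvd_le hlinj (fun i => (hm i).2) hBdvd
      omega

lemma verifiesP_of_monic_notBad {p : Polynomial ℝ} (hm : p.Monic) (hb : ¬ Bad p) :
    VerifiesP p := by
  classical
  have hp0 : p ≠ 0 := hm.ne_zero
  set M := UniqueFactorizationMonoid.normalizedFactors p with hMdef
  have hirr : ∀ π ∈ M, Irreducible π := fun π hπ =>
    UniqueFactorizationMonoid.irreducible_of_normalized_factor π hπ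
  have hmonic : ∀ π ∈ M, π.Monic := by
    intro π hπ
    have h := monic_normalize (p := π) (hirr π hπ).ne_zero
    rwa [UniqueFactorizationMonoid.normalize_normalized_factor π hπ] at h
  have hfac : M.prod = p := by
    refine eq_of_monic_of_associated ?_ hm (UniqueFactorizationMonoid.prod_normalizedFactors hp0)
    have h := monic_multiset_prod_of_monic M id (fun π hπ => hmonic π hπ)
    simpa using h
  have hdeg12 : ∀ π ∈ M, π.natDegree = 1 ∨ π.natDegree = 2 := by
    intro π hπ
    have h2 := (hirr π hπ).natDegree_le_two
    have h1 : π.natDegree ≠ 0 := by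
      intro h0
      have hC := eq_C_of_natDegree_eq_zero h0
      have hne : π.coeff 0 ≠ 0 := fun hc => (hirr π hπ).ne_zero (by rw [hC, hc, map_zero])
      exact (hirr π hπ).not_isUnit (hC ▸ isUnit_C.2 (Ne.isUnit hne))
    omega
  have hcount_pow : ∀ π ∈ M, π ^ (M.count π) ∣ p := by
    intro π hπ
    rw [← hfac]
    have hle : Multiset.replicate (M.count π) π ≤ M := Multiset.le_iff_count.2 (by
      intro b
      rw [Multiset.count_replicate]
      split
      · next h => rw [h]
      · exact Nat.zero_le _)
    calc π ^ (M.count π) = (Multiset.replicate (M.count π) π).prod :=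
          (Multiset.prod_replicate _ _).symm
      _ ∣ M.prod := Multiset.prod_dvd_prod_of_le hle
  have hcount2 : ∀ π ∈ M, π.natDegree = 2 → M.count π = 1 := by
    intro π hπ h2
    by_contra hc
    have hc2 : 2 ≤ M.count π := by
      have := Multiset.one_le_count_iff_mem.2 hπ
      omega
    have hdvd : π ^ 2 ∣ p := (pow_dvd_pow π hc2).trans (hcount_pow π hπ)
    exact hb ⟨π, hmonic π hπ, Or.inr ⟨h2,
      dsc_nonpos_of_irreducible (hmonic π hπ) h2 (hirr π hπ), hdvd⟩⟩
  have hcount1 : ∀ π ∈ M, π.natDegree = 1 → M.count π ≤ 2 := by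
    intro π hπ h1
    by_contra hc
    push_neg at hc
    have h3 : π ^ 3 ∣ p := (pow_dvd_pow π hc).trans (hcount_pow π hπ)
    have heq : π = X + C (π.coeff 0) := (hmonic π hπ).eq_X_add_C h1
    have hdd : π ∣ derivative (derivative p) := by
      rw [heq] at h3 ⊢
      have step1 := pow_dvd_derivative (k := 2) h3
      have step2 := pow_dvd_derivative (k := 1) step1
      simpa using step2
    exact hb ⟨π, hmonic π hπ, Or.inl ⟨h1, (pow_dvd_pow π (by omega)).trans (hcount_pow π hπ), hdd⟩⟩
  set Qs := M.toFinset.filter (fun π => π.natDegree = 2) with hQs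
  set Ls := M.toFinset.filter (fun π => π.natDegree = 1) with hLs
  have hQmem : ∀ π ∈ Qs, π ∈ M ∧ π.natDegree = 2 := by
    intro π hπ
    rw [hQs, Finset.mem_filter, Multiset.mem_toFinset] at hπ
    exact hπ
  have hLmem : ∀ π ∈ Ls, π ∈ M ∧ π.natDegree = 1 := by
    intro π hπ
    rw [hLs, Finset.mem_filter, Multiset.mem_toFinset] at hπ
    exact hπ
  refine ⟨Qs.card, Ls.card,
    fun i => (Qs.equivFin.symm i).1,
    fun i => -((Ls.equivFin.symm i).1.coeff 0),
    fun i => M.count (Ls.equivFin.symm i).1, ?_, ?_, ?_, ?_, ?_⟩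
  · intro i
    obtain ⟨hmem, hdeg⟩ := hQmem _ (Qs.equivFin.symm i).2
    exact ⟨hmonic _ hmem, hirr _ hmem, hdeg⟩
  · intro i j hij
    exact Qs.equivFin.symm.injective (Subtype.coe_injective hij)
  · intro i j hij
    have h0 : (Ls.equivFin.symm i).1.coeff 0 = (Ls.equivFin.symm j).1.coeff 0 := neg_inj.1 hij
    obtain ⟨hmi, hdi⟩ := hLmem _ (Ls.equivFin.symm i).2
    obtain ⟨hmj, hdj⟩ := hLmem _ (Ls.equivFin.symm j).2
    have hvals : (Ls.equivFin.symm i).1 = (Ls.equivFin.symm j).1 := by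
      rw [(hmonic _ hmi).eq_X_add_C hdi, (hmonic _ hmj).eq_X_add_C hdj, h0]
    exact Ls.equivFin.symm.injective (Subtype.coe_injective hvals)
  · intro i
    obtain ⟨hmi, hdi⟩ := hLmem _ (Ls.equivFin.symm i).2
    exact ⟨Multiset.one_le_count_iff_mem.2 hmi, hcount1 _ hmi hdi⟩
  · have hsplit : ∏ π ∈ M.toFinset, π ^ M.count π =
        (∏ π ∈ Qs, π ^ M.count π) * ∏ π ∈ Ls, π ^ M.count π := by
      rw [← Finset.prod_filter_mul_prod_filter_not M.toFinset (fun π => π.natDegree = 2)]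
      congr 1
      refine Finset.prod_congr ?_ (fun _ _ => rfl)
      ext π
      simp only [Finset.mem_filter, Multiset.mem_toFinset, hLs]
      constructor
      · rintro ⟨hπ, hne⟩
        exact ⟨hπ, (hdeg12 π hπ).resolve_right hne⟩
      · rintro ⟨hπ, h1⟩
        refine ⟨hπ, by omega⟩
    have hQprod : ∏ π ∈ Qs, π ^ M.count π = ∏ π ∈ Qs, π := by
      refine Finset.prod_congr rfl fun π hπ => ?_
      obtain ⟨hm', hd'⟩ := hQmem π hπ
      rw [hcount2 π hm' hd', pow_one]
    have hPfin : ∏ i : Fin Qs.card, (Qs.equivFin.symm i).1 = ∏ π ∈ Qs, π := by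
      rw [← Finset.prod_coe_sort Qs (fun π => (π : Polynomial ℝ))]
      exact Equiv.prod_comp Qs.equivFin.symm _
    have hLfin : ∏ i : Fin Ls.card,
        (X - C (-((Ls.equivFin.symm i).1.coeff 0))) ^ (M.count (Ls.equivFin.symm i).1) =
        ∏ π ∈ Ls, π ^ M.count π := by
      rw [← Finset.prod_coe_sort Ls (fun π => (π : Polynomial ℝ) ^ M.count (π : Polynomial ℝ))]
      refine Eq.trans (Finset.prod_congr rfl fun i _ => ?_) (Equiv.prod_comp Ls.equivFin.symm _)
      obtain ⟨hmi, hdi⟩ := hLmem _ (Ls.equivFin.symm i).2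
      rw [map_neg, sub_neg_eq_add, ← (hmonic _ hmi).eq_X_add_C hdi]
    rw [hPfin, hLfin, ← hQprod, ← hsplit, ← Finset.prod_multiset_count, hfac]

lemma bad_C_mul_iff {c : ℝ} (hc : c ≠ 0) (p : Polynomial ℝ) : Bad (C c * p) ↔ Bad p := by
  have hu : IsUnit (C c : Polynomial ℝ) := isUnit_C.2 (Ne.isUnit hc)
  have hder : derivative (derivative (C c * p)) = C c * derivative (derivative p) := by
    rw [derivative_C_mul, derivative_C_mul]
  constructor
  · rintro ⟨d, hdm, hcase⟩
    refine ⟨d, hdm, ?_⟩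
    rcases hcase with ⟨h1, h2, h3⟩ | ⟨h1, h2, h3⟩
    · exact Or.inl ⟨h1, (hu.dvd_mul_left).1 h2, (hu.dvd_mul_left).1 (hder ▸ h3)⟩
    · exact Or.inr ⟨h1, h2, (hu.dvd_mul_left).1 h3⟩
  · rintro ⟨d, hdm, hcase⟩
    refine ⟨d, hdm, ?_⟩
    rcases hcase with ⟨h1, h2, h3⟩ | ⟨h1, h2, h3⟩
    · exact Or.inl ⟨h1, (hu.dvd_mul_left).2 h2, by rw [hder]; exact (hu.dvd_mul_left).2 h3⟩
    · exact Or.inr ⟨h1, h2, (hu.dvd_mul_left).2 h3⟩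

lemma coeff_polyOf {n : ℕ} (a : Fin (n+1) → ℝ) (j : ℕ) :
    (polyOf a).coeff j = if h : j < n + 1 then a ⟨j, h⟩ else 0 := by
  rw [polyOf, finset_sum_coeff]
  simp only [coeff_C_mul, coeff_X_pow]
  by_cases h : j < n + 1
  · rw [dif_pos h]
    rw [Finset.sum_eq_single (⟨j, h⟩ : Fin (n+1))]
    · simp
    · intro b _ hb
      have : j ≠ (b : ℕ) := fun hh => hb (by ext; simp [hh.symm])
      simp [this]
    · intro hmem
      exact absurd (Finset.mem_univ _) hmem
  · rw [dif_neg h]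
    refine Finset.sum_eq_zero fun b _ => ?_
    have : j ≠ (b : ℕ) := fun hh => h (hh ▸ b.2)
    simp [this]

lemma natDegree_polyOf {n : ℕ} (a : Fin (n+1) → ℝ) : (polyOf a).natDegree ≤ n := by
  refine natDegree_le_iff_coeff_eq_zero.2 fun N hN => ?_
  rw [coeff_polyOf, dif_neg (by omega)]

lemma degree_polyOf_iff {n : ℕ} (a : Fin (n+1) → ℝ) :
    (polyOf a).degree = (n : ℕ) ↔ a (Fin.last n) ≠ 0 := by
  have hcoeff : (polyOf a).coeff n = a (Fin.last n) := by
    rw [coeff_polyOf, dif_pos (Nat.lt_succ_self n)]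
    rfl
  constructor
  · intro h
    rw [← hcoeff]
    exact coeff_ne_zero_of_eq_degree h
  · intro h
    refine le_antisymm ?_ (le_degree_of_ne_zero (hcoeff ▸ h))
    exact degree_le_natDegree.trans (by exact_mod_cast Nat.cast_le.2 (natDegree_polyOf a))

lemma cauchy_bound {n : ℕ} (hn : 1 ≤ n) {ε M : ℝ} (hε : 0 < ε) {b : Fin (n+1) → ℝ}
    (hb : ∀ i, |b i| ≤ M) (hlead : ε ≤ |b (Fin.last n)|) {z : ℂ}
    (hz : Polynomial.aeval z (polyOf b) = 0) :
    ‖z‖ ≤ max 1 (n * M / ε) := by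
  by_cases habs : ‖z‖ ≤ 1
  · exact le_max_of_le_left habs
  push_neg at habs
  have hM : 0 ≤ M := le_trans (abs_nonneg _) (hb (Fin.last n))
  have hsum : ∑ k : Fin (n+1), (b k : ℂ) * z ^ (k : ℕ) = 0 := by
    have h := hz
    simp only [polyOf, map_sum, map_mul, map_pow, aeval_C, aeval_X] at h
    simpa using h
  rw [Fin.sum_univ_castSucc] at hsum
  have hlast : (b (Fin.last n) : ℂ) * z ^ n =
      -∑ k : Fin n, (b k.castSucc : ℂ) * z ^ (k : ℕ) := by
    have h := eq_neg_of_add_eq_zero_right hsum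
    simpa using h
  have habs0 : (0:ℝ) < ‖z‖ := lt_trans one_pos habs
  have h1 : ε * ‖z‖ ^ n ≤ (n * M) * ‖z‖ ^ (n-1) := by
    calc ε * ‖z‖ ^ n ≤ |b (Fin.last n)| * ‖z‖ ^ n :=
          mul_le_mul_of_nonneg_right hlead (pow_nonneg (norm_nonneg _) _)
      _ = ‖(b (Fin.last n) : ℂ) * z ^ n‖ := by
          rw [norm_mul, norm_pow, Complex.norm_real, Real.norm_eq_abs]
      _ = ‖∑ k : Fin n, (b k.castSucc : ℂ) * z ^ (k : ℕ)‖ := by rw [hlast, norm_neg]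
      _ ≤ ∑ k : Fin n, ‖(b k.castSucc : ℂ) * z ^ (k : ℕ)‖ := norm_sum_le _ _
      _ ≤ ∑ _k : Fin n, M * ‖z‖ ^ (n-1) := by
          refine Finset.sum_le_sum fun k _ => ?_
          rw [norm_mul, norm_pow, Complex.norm_real, Real.norm_eq_abs]
          refine mul_le_mul (hb _) (pow_le_pow_right₀ habs.le (by omega)) ?_ hM
          exact pow_nonneg (norm_nonneg _) _
      _ = (n * M) * ‖z‖ ^ (n-1) := by
          rw [Finset.sum_const, Finset.card_univ, Fintype.card_fin, nsmul_eq_mul]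
          ring
  have hpow : ‖z‖ ^ n = ‖z‖ ^ (n-1) * ‖z‖ := by
    rw [← pow_succ]
    congr 1
    omega
  rw [hpow, ← mul_assoc] at h1
  have h2 : ε * ‖z‖ ≤ n * M := by
    have hp : (0:ℝ) < ‖z‖ ^ (n-1) := pow_pos habs0 _
    have h1' : (ε * ‖z‖) * ‖z‖ ^ (n-1) ≤ (n * M) * ‖z‖ ^ (n-1) := by
      calc (ε * ‖z‖) * ‖z‖ ^ (n-1) = ε * ‖z‖ ^ (n-1) * ‖z‖ := by ring
        _ ≤ _ := h1
    exact le_of_mul_le_mul_right h1' hp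
  refine le_max_of_le_right ?_
  rw [le_div_iff₀ hε]
  calc ‖z‖ * ε = ε * ‖z‖ := by ring
    _ ≤ n * M := h2

lemma tendsto_coeff_mul {f g : ℕ → Polynomial ℝ} {F G : Polynomial ℝ}
    (hf : ∀ j, Tendsto (fun k => (f k).coeff j) atTop (𝓝 (F.coeff j)))
    (hg : ∀ j, Tendsto (fun k => (g k).coeff j) atTop (𝓝 (G.coeff j))) (j : ℕ) :
    Tendsto (fun k => ((f k) * (g k)).coeff j) atTop (𝓝 ((F * G).coeff j)) := by
  simp only [coeff_mul]
  exact tendsto_finset_sum _ fun x _ => (hf x.1).mul (hg x.2)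

lemma tendsto_coeff_derivative {f : ℕ → Polynomial ℝ} {F : Polynomial ℝ}
    (hf : ∀ j, Tendsto (fun k => (f k).coeff j) atTop (𝓝 (F.coeff j))) (j : ℕ) :
    Tendsto (fun k => (derivative (f k)).coeff j) atTop (𝓝 ((derivative F).coeff j)) := by
  simp only [coeff_derivative]
  exact (hf (j+1)).mul_const _

lemma tendsto_eval {f : ℕ → Polynomial ℝ} {F : Polynomial ℝ} {N : ℕ}
    (hdf : ∀ k, (f k).natDegree < N) (hdF : F.natDegree < N)
    (hf : ∀ j, Tendsto (fun k => (f k).coeff j) atTop (𝓝 (F.coeff j)))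
    {x : ℕ → ℝ} {x₀ : ℝ} (hx : Tendsto x atTop (𝓝 x₀)) :
    Tendsto (fun k => (f k).eval (x k)) atTop (𝓝 (F.eval x₀)) := by
  have hrw : (fun k => (f k).eval (x k)) =
      fun k => ∑ i ∈ Finset.range N, (f k).coeff i * (x k) ^ i :=
    funext fun k => eval_eq_sum_range' (hdf k) _
  rw [hrw, eval_eq_sum_range' hdF]
  exact tendsto_finset_sum _ fun i _ => (hf i).mul (hx.pow i)

lemma aeval_complex_of_eval {p : Polynomial ℝ} {x : ℝ} (h : p.eval x = 0) :
    Polynomial.aeval ((x : ℂ)) p = 0 := by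
  have hh : (Polynomial.aeval (algebraMap ℝ ℂ x)) p = algebraMap ℝ ℂ (p.eval x) := by
    rw [aeval_def, eval₂_at_apply]
  rw [h, map_zero] at hh
  simpa using hh

lemma tendsto_coeff_polyOf {n : ℕ} {y : ℕ → Fin (n+1) → ℝ} {a₀ : Fin (n+1) → ℝ}
    (hlim : Tendsto y atTop (𝓝 a₀)) (j : ℕ) :
    Tendsto (fun k => (polyOf (y k)).coeff j) atTop (𝓝 ((polyOf a₀).coeff j)) := by
  by_cases h : j < n + 1
  · simp only [coeff_polyOf, dif_pos h]
    exact (tendsto_pi_nhds.1 hlim) _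
  · simp only [coeff_polyOf, dif_neg h]
    exact tendsto_const_nhds

lemma bad_limit_case1 {n : ℕ} (hn : 1 ≤ n) {y : ℕ → Fin (n+1) → ℝ} {a₀ : Fin (n+1) → ℝ}
    (hlim : Tendsto y atTop (𝓝 a₀)) {ε M : ℝ} (hε : 0 < ε)
    (hbM : ∀ k i, |y k i| ≤ M) (hbε : ∀ k, ε ≤ |y k (Fin.last n)|)
    {d : ℕ → Polynomial ℝ} (hdm : ∀ k, (d k).Monic)
    (hc : ∀ k, (d k).natDegree = 1 ∧ (d k) ^ 2 ∣ polyOf (y k) ∧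
      d k ∣ derivative (derivative (polyOf (y k)))) :
    Bad (polyOf a₀) := by
  set lam : ℕ → ℝ := fun k => -((d k).coeff 0) with hlam
  have hdeq : ∀ k, d k = X - C (lam k) := by
    intro k
    rw [hlam]
    simp only [map_neg, sub_neg_eq_add]
    exact (hdm k).eq_X_add_C (hc k).1
  have hroot0 : ∀ k, (polyOf (y k)).IsRoot (lam k) ∧
      (derivative (polyOf (y k))).IsRoot (lam k) := fun k =>
    isRoot_of_sq_dvd (by rw [← hdeq k]; exact (hc k).2.1)
  have hroot2 : ∀ k, (derivative (derivative (polyOf (y k)))).IsRoot (lam k) := by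
    intro k
    have h := (hc k).2.2
    rw [hdeq k] at h
    exact dvd_iff_isRoot.1 h
  set R := max 1 ((n : ℝ) * M / ε) with hR
  have hRb : ∀ k, lam k ∈ Metric.closedBall (0:ℝ) R := by
    intro k
    rw [Metric.mem_closedBall, dist_zero_right, Real.norm_eq_abs]
    have hz : Polynomial.aeval ((lam k : ℂ)) (polyOf (y k)) = 0 :=
      aeval_complex_of_eval ((hroot0 k).1)
    have h := cauchy_bound hn hε (fun i => hbM k i) (hbε k) hz
    rwa [Complex.norm_real, Real.norm_eq_abs] at h
  obtain ⟨x₀, _, ψ, hψ, hxlim⟩ := (isCompact_closedBall (0:ℝ) R).tendsto_subseq hRb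
  have hycoeff : ∀ j, Tendsto (fun t => (polyOf (y (ψ t))).coeff j) atTop
      (𝓝 ((polyOf a₀).coeff j)) :=
    tendsto_coeff_polyOf (hlim.comp hψ.tendsto_atTop)
  have hdeg0 : ∀ k, (polyOf (y k)).natDegree < n + 1 :=
    fun k => Nat.lt_succ_of_le (natDegree_polyOf _)
  have hdeg0' : (polyOf a₀).natDegree < n + 1 := Nat.lt_succ_of_le (natDegree_polyOf _)
  have hdeg1 : ∀ q : Polynomial ℝ, q.natDegree < n + 1 → (derivative q).natDegree < n + 1 :=
    fun q hq => Nat.lt_succ_of_le (le_trans (natDegree_derivative_le q) (by omega))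
  have h0 : (polyOf a₀).IsRoot x₀ := by
    have ht := tendsto_eval (fun t => hdeg0 (ψ t)) hdeg0' hycoeff hxlim
    exact tendsto_nhds_unique (ht.congr (fun t => (hroot0 (ψ t)).1)) tendsto_const_nhds
  have h1 : (derivative (polyOf a₀)).IsRoot x₀ := by
    have ht := tendsto_eval (f := fun t => derivative (polyOf (y (ψ t))))
      (fun t => hdeg1 _ (hdeg0 (ψ t))) (hdeg1 _ hdeg0')
      (tendsto_coeff_derivative hycoeff) hxlim
    exact tendsto_nhds_unique (ht.congr (fun t => (hroot0 (ψ t)).2)) tendsto_const_nhds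
  have h2 : (derivative (derivative (polyOf a₀))).IsRoot x₀ := by
    have ht := tendsto_eval (f := fun t => derivative (derivative (polyOf (y (ψ t)))))
      (fun t => hdeg1 _ (hdeg1 _ (hdeg0 (ψ t)))) (hdeg1 _ (hdeg1 _ hdeg0'))
      (tendsto_coeff_derivative (tendsto_coeff_derivative hycoeff)) hxlim
    exact tendsto_nhds_unique (ht.congr (fun t => hroot2 (ψ t))) tendsto_const_nhds
  exact ⟨X - C x₀, monic_X_sub_C x₀,
    Or.inl ⟨natDegree_X_sub_C x₀, sq_dvd_of_isRoot h0 h1, dvd_iff_isRoot.2 h2⟩⟩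

lemma quad_coeff_all (s t : ℝ) (j : ℕ) :
    (X ^ 2 + C s * X + C t : Polynomial ℝ).coeff j =
      if j = 0 then t else if j = 1 then s else if j = 2 then 1 else 0 := by
  match j with
  | 0 => simp [coeff_X_pow]
  | 1 => simp [coeff_X_pow]
  | 2 => simp [coeff_X_pow]
  | (jj+3) =>
    simp [coeff_X_pow, (by omega : ¬ (jj+3 = 2)), (by omega : ¬ (jj+3 = 1)),
      (by omega : ¬ (jj+3 = 0))]

lemma bad_limit_case2 {n : ℕ} (hn : 1 ≤ n) {y : ℕ → Fin (n+1) → ℝ} {a₀ : Fin (n+1) → ℝ}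
    (hlim : Tendsto y atTop (𝓝 a₀)) {ε M : ℝ} (hε : 0 < ε)
    (hbM : ∀ k i, |y k i| ≤ M) (hbε : ∀ k, ε ≤ |y k (Fin.last n)|)
    {d : ℕ → Polynomial ℝ} (hdm : ∀ k, (d k).Monic)
    (hc : ∀ k, (d k).natDegree = 2 ∧ Dsc (d k) ≤ 0 ∧ (d k) ^ 2 ∣ polyOf (y k)) :
    Bad (polyOf a₀) := by
  classical
  have hM : 0 ≤ M := le_trans (abs_nonneg _) (hbM 0 (Fin.last n))
  set R := max 1 ((n:ℝ) * M / ε) with hR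
  have hR0 : (0:ℝ) ≤ R := le_trans zero_le_one (le_max_left _ _)
  set p := fun k => polyOf (y k) with hp
  have hcoeffn : ∀ k, (p k).coeff n = y k (Fin.last n) := by
    intro k
    rw [hp]
    rw [coeff_polyOf, dif_pos (Nat.lt_succ_self n)]
    rfl
  have hyn0 : ∀ k, y k (Fin.last n) ≠ 0 := by
    intro k h0
    have hb := hbε k
    rw [h0] at hb
    simp at hb
    linarith
  have hp0 : ∀ k, p k ≠ 0 := by
    intro k hk
    have h := hcoeffn k
    rw [hk, coeff_zero] at h
    exact hyn0 k h.symm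
  have hpdeg : ∀ k, (p k).natDegree = n := by
    intro k
    refine le_antisymm (natDegree_polyOf _) (le_natDegree_of_ne_zero ?_)
    rw [hcoeffn k]
    exact hyn0 k
  have hroots : ∀ (k : ℕ) (ζ : ℂ), Polynomial.aeval ζ (p k) = 0 → ‖ζ‖ ≤ R :=
    fun k ζ h => cauchy_bound hn hε (fun i => hbM k i) (hbε k) h
  have hdvd : ∀ k, d k ∣ p k := fun k => (dvd_pow_self (d k) two_ne_zero).trans (hc k).2.2
  have hdz : ∀ (k : ℕ) (ζ : ℂ), Polynomial.aeval ζ (d k) = 0 → Polynomial.aeval ζ (p k) = 0 := by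
    intro k ζ h
    obtain ⟨w, hw⟩ := hdvd k
    rw [hw, map_mul, h, zero_mul]
  have hzex : ∀ k, ∃ ζ : ℂ, Polynomial.aeval ζ (d k) = 0 := by
    intro k
    have hdeg2 : (0:WithBot ℕ) < ((d k).map (algebraMap ℝ ℂ)).degree := by
      rw [(hdm k).degree_map, degree_eq_natDegree (hdm k).ne_zero, (hc k).1]
      exact_mod_cast Nat.zero_lt_two
    obtain ⟨ζ, hζ⟩ := Complex.exists_root hdeg2
    refine ⟨ζ, ?_⟩
    rw [aeval_def, ← eval_map]
    exact hζ
  choose z hzd using hzex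
  set s := fun k => (d k).coeff 1 with hs
  set t := fun k => (d k).coeff 0 with ht
  have hdeq : ∀ k, d k = X ^ 2 + C (s k) * X + C (t k) := fun k => monic_quad_eq (hdm k) (hc k).1
  have hzeq : ∀ k, (z k) ^ 2 + (s k : ℂ) * z k + (t k : ℂ) = 0 := by
    intro k
    have h := hzd k
    rw [hdeq k] at h
    simpa [map_add, map_mul, map_pow, aeval_C, aeval_X, Complex.coe_algebraMap] using h
  set w := fun k => -((s k : ℂ)) - z k with hwdef
  have hweq : ∀ k, Polynomial.aeval (w k) (d k) = 0 := by
    intro k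
    rw [hdeq k]
    simp only [map_add, map_mul, map_pow, aeval_C, aeval_X, Complex.coe_algebraMap]
    have hze := hzeq k
    have hwk : w k = -((s k : ℂ)) - z k := rfl
    rw [hwk]
    linear_combination hze
  have hzb : ∀ k, ‖z k‖ ≤ R := fun k => hroots k _ (hdz k _ (hzd k))
  have hwb : ∀ k, ‖w k‖ ≤ R := fun k => hroots k _ (hdz k _ (hweq k))
  have hsb : ∀ k, |s k| ≤ 2 * R := by
    intro k
    have h1 : ((s k : ℂ)) = -(z k + w k) := by
      have hwk : w k = -((s k : ℂ)) - z k := rfl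
      rw [hwk]; ring
    calc |s k| = ‖((s k : ℂ))‖ := by rw [Complex.norm_real, Real.norm_eq_abs]
      _ = ‖z k + w k‖ := by rw [h1, norm_neg]
      _ ≤ ‖z k‖ + ‖w k‖ := norm_add_le _ _
      _ ≤ 2 * R := by linarith [hzb k, hwb k]
  have htb : ∀ k, |t k| ≤ R ^ 2 := by
    intro k
    have h1 : ((t k : ℂ)) = z k * w k := by
      have hze := hzeq k
      have hwk : w k = -((s k : ℂ)) - z k := rfl
      rw [hwk]
      linear_combination hze
    calc |t k| = ‖((t k : ℂ))‖ := by rw [Complex.norm_real, Real.norm_eq_abs]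
      _ = ‖z k‖ * ‖w k‖ := by rw [h1, norm_mul]
      _ ≤ R * R := mul_le_mul (hzb k) (hwb k) (norm_nonneg _) hR0
      _ = R ^ 2 := (sq R).symm
  set e := fun k => p k /ₘ (d k) ^ 2 with he
  have hpe : ∀ k, p k = (d k) ^ 2 * e k := by
    intro k
    have hmod : p k %ₘ (d k) ^ 2 = 0 :=
      (modByMonic_eq_zero_iff_dvd ((hdm k).pow 2)).2 (hc k).2.2
    conv_lhs => rw [← modByMonic_add_div (p k) ((d k) ^ 2)]
    rw [hmod, zero_add]
  have he0 : ∀ k, e k ∣ p k := fun k => ⟨(d k) ^ 2, by rw [hpe k]; ring⟩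
  have hedeg : ∀ k, (e k).natDegree ≤ n := fun k =>
    le_trans (natDegree_le_of_dvd (he0 k) (hp0 k)) (le_of_eq (hpdeg k))
  have helead : ∀ k, (e k).leadingCoeff = y k (Fin.last n) := by
    intro k
    have h1 := leadingCoeff_mul ((d k) ^ 2) (e k)
    rw [← hpe k, ((hdm k).pow 2).leadingCoeff, one_mul] at h1
    rw [← h1, leadingCoeff, hpdeg k, hcoeffn k]
  have hene : ∀ k, (e k).leadingCoeff ≠ 0 := by
    intro k h
    exact hyn0 k (by rw [← helead k]; exact h)
  set B1 := (max R 1) ^ n * (n.choose (n / 2) : ℝ) with hB1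
  have hB10 : 0 ≤ B1 := by positivity
  have heB : ∀ k i, |(e k).coeff i| ≤ M * B1 := by
    intro k i
    have hek0 : e k ≠ 0 := fun h0 => hene k (by rw [h0]; simp)
    have hmon : ((e k) * C ((e k).leadingCoeff)⁻¹).Monic := monic_mul_leadingCoeff_inv hek0
    have hdegm : ((e k) * C ((e k).leadingCoeff)⁻¹).natDegree ≤ n := by
      rw [mul_comm, natDegree_C_mul (inv_ne_zero (hene k))]
      exact hedeg k
    have hrootsb : ∀ ζ ∈ (((e k) * C ((e k).leadingCoeff)⁻¹).map (algebraMap ℝ ℂ)).roots,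
        ‖ζ‖ ≤ R := by
      intro ζ hζ
      rw [Polynomial.map_mul, map_C] at hζ
      have hC0 : (algebraMap ℝ ℂ) ((e k).leadingCoeff)⁻¹ ≠ 0 := by
        simpa using inv_ne_zero (hene k)
      rw [mul_comm, roots_C_mul _ hC0] at hζ
      have hmem : ζ ∈ ((p k).map (algebraMap ℝ ℂ)).roots := by
        refine Multiset.mem_of_le (roots.le_of_dvd ?_ ?_) hζ
        · exact Polynomial.map_ne_zero (hp0 k)
        · exact Polynomial.map_dvd _ (he0 k)
      refine hroots k ζ ?_
      rw [aeval_def, ← eval_map]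
      exact (mem_roots'.1 hmem).2
    have hbd := coeff_bdd_of_roots_le (algebraMap ℝ ℂ) hmon
      (IsAlgClosed.splits _) hdegm hrootsb i
    rw [coeff_map, coeff_mul_C] at hbd
    have habs : ‖(algebraMap ℝ ℂ) ((e k).coeff i * ((e k).leadingCoeff)⁻¹)‖ =
        |(e k).coeff i * ((e k).leadingCoeff)⁻¹| := by
      rw [Complex.coe_algebraMap, Complex.norm_real, Real.norm_eq_abs]
    rw [habs] at hbd
    have hcM : |(e k).leadingCoeff| ≤ M := by rw [helead k]; exact hbM k _
    calc |(e k).coeff i|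
        = |(e k).coeff i * ((e k).leadingCoeff)⁻¹| * |(e k).leadingCoeff| := by
          rw [← abs_mul]
          congr 1
          field_simp [hene k]
      _ ≤ B1 * M := by
          refine mul_le_mul ?_ hcM (abs_nonneg _) hB10
          rw [hB1]
          exact hbd
      _ = M * B1 := mul_comm _ _
  set v := fun k => (fun i : Fin (n+1) => (e k).coeff i) with hv
  set B2 := max (M * B1) 0 with hB2
  have hvb : ∀ k, ‖v k‖ ≤ B2 := by
    intro k
    refine (pi_norm_le_iff_of_nonneg (le_max_right _ _)).2 fun i => ?_
    rw [Real.norm_eq_abs]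
    exact le_trans (heB k i) (le_max_left _ _)
  set CC := max (2*R) (max (R^2) B2) with hCC
  set u := fun k => ((s k, t k, v k) : ℝ × ℝ × (Fin (n+1) → ℝ)) with hu
  have humem : ∀ k, u k ∈ Metric.closedBall (0 : ℝ × ℝ × (Fin (n+1) → ℝ)) CC := by
    intro k
    rw [mem_closedBall_zero_iff, Prod.norm_def, Prod.norm_def]
    simp only [Real.norm_eq_abs]
    refine max_le (le_trans (hsb k) (le_max_left _ _)) (max_le ?_ ?_)
    · exact le_trans (htb k) (le_trans (le_max_left _ _) (le_max_right _ _))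
    · exact le_trans (hvb k) (le_trans (le_max_right _ _) (le_max_right _ _))
  obtain ⟨⟨s₀, t₀, v₀⟩, -, ψ, hψ, hulim⟩ :=
    (isCompact_closedBall (0 : ℝ × ℝ × (Fin (n+1) → ℝ)) CC).tendsto_subseq humem
  have hslim : Tendsto (fun k => s (ψ k)) atTop (𝓝 s₀) :=
    (continuous_fst.tendsto _).comp hulim
  have htlim : Tendsto (fun k => t (ψ k)) atTop (𝓝 t₀) :=
    ((continuous_fst.comp continuous_snd).tendsto _).comp hulim
  have hvlim : ∀ i, Tendsto (fun k => v (ψ k) i) atTop (𝓝 (v₀ i)) := fun i =>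
    (((continuous_apply i).comp (continuous_snd.comp continuous_snd)).tendsto _).comp hulim
  set dD := X ^ 2 + C s₀ * X + C t₀ with hdD
  set eE := polyOf v₀ with heE
  have hdco : ∀ j, Tendsto (fun k => (d (ψ k)).coeff j) atTop (𝓝 (dD.coeff j)) := by
    intro j
    have hrw : ∀ k, (d (ψ k)).coeff j =
        if j = 0 then t (ψ k) else if j = 1 then s (ψ k) else if j = 2 then 1 else 0 := by
      intro k
      conv_lhs => rw [hdeq (ψ k)]
      exact quad_coeff_all _ _ j
    have hrwD : dD.coeff j = if j = 0 then t₀ else if j = 1 then s₀ else if j = 2 then 1 else 0 :=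
      quad_coeff_all _ _ j
    simp only [hrw, hrwD]
    by_cases j0 : j = 0
    · simp only [if_pos j0]; exact htlim
    by_cases j1 : j = 1
    · simp only [if_neg j0, if_pos j1]; exact hslim
    by_cases j2 : j = 2
    · simp only [if_neg j0, if_neg j1, if_pos j2]; exact tendsto_const_nhds
    · simp only [if_neg j0, if_neg j1, if_neg j2]; exact tendsto_const_nhds
  have heco : ∀ j, Tendsto (fun k => (e (ψ k)).coeff j) atTop (𝓝 (eE.coeff j)) := by
    intro j
    by_cases hj : j < n + 1
    · have h2 : eE.coeff j = v₀ ⟨j, hj⟩ := by rw [heE, coeff_polyOf, dif_pos hj]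
      rw [h2]
      exact hvlim ⟨j, hj⟩
    · have h1 : ∀ k, (e (ψ k)).coeff j = 0 := fun k =>
        coeff_eq_zero_of_natDegree_lt (lt_of_le_of_lt (hedeg (ψ k)) (by omega))
      have h2 : eE.coeff j = 0 := by rw [heE, coeff_polyOf, dif_neg hj]
      simp only [h1, h2]
      exact tendsto_const_nhds
  have hpco := tendsto_coeff_polyOf (hlim.comp hψ.tendsto_atTop)
  have hprod : ∀ j, Tendsto (fun k => ((d (ψ k)) * (d (ψ k)) * (e (ψ k))).coeff j) atTop
      (𝓝 ((dD * dD * eE).coeff j)) :=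
    fun j => tendsto_coeff_mul (tendsto_coeff_mul hdco hdco) heco j
  have hfinal : polyOf a₀ = dD * dD * eE := by
    ext j
    refine tendsto_nhds_unique ((hpco j).congr fun k => ?_) (hprod j)
    rw [show (d (ψ k)) * (d (ψ k)) * (e (ψ k)) = (d (ψ k)) ^ 2 * e (ψ k) by ring, ← hpe (ψ k)]
    rfl
  have hdscD : Dsc dD ≤ 0 := by
    have hDs : Dsc dD = s₀ ^ 2 - 4 * t₀ := by
      rw [Dsc, hdD, (quad_coeff s₀ t₀).1, (quad_coeff s₀ t₀).2]
    rw [hDs]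
    have htend : Tendsto (fun k => (s (ψ k)) ^ 2 - 4 * (t (ψ k))) atTop (𝓝 (s₀ ^ 2 - 4 * t₀)) :=
      (hslim.pow 2).sub (htlim.const_mul 4)
    refine le_of_tendsto htend (Eventually.of_forall fun k => ?_)
    exact (hc (ψ k)).2.1
  exact ⟨dD, quad_monic s₀ t₀, Or.inr ⟨quad_natDegree s₀ t₀, hdscD,
    ⟨eE, by rw [hfinal]; ring⟩⟩⟩

lemma bad_limit {n : ℕ} (hn : 1 ≤ n) {x : ℕ → Fin (n+1) → ℝ} {a₀ : Fin (n+1) → ℝ}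
    (hlim : Tendsto x atTop (𝓝 a₀)) (ha : a₀ (Fin.last n) ≠ 0)
    (hx : ∀ k, x k (Fin.last n) ≠ 0 → Bad (polyOf (x k))) :
    Bad (polyOf a₀) := by
  classical
  set ε := |a₀ (Fin.last n)| / 2 with hεdef
  have hε : 0 < ε := by
    have := abs_pos.2 ha
    rw [hεdef]
    linarith
  set M := ‖a₀‖ + ε + 1 with hMdef
  have hev : ∀ᶠ k in atTop, (∀ i, |x k i| ≤ M) ∧ ε ≤ |x k (Fin.last n)| := by
    have hball : ∀ᶠ k in atTop, dist (x k) a₀ < min ε 1 := by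
      have := Metric.tendsto_atTop.1 hlim (min ε 1) (lt_min hε one_pos)
      obtain ⟨N, hN⟩ := this
      exact eventually_atTop.2 ⟨N, fun k hk => hN k hk⟩
    filter_upwards [hball] with k hk
    have hcoord : ∀ i, |x k i - a₀ i| < min ε 1 := by
      intro i
      have h1 : dist (x k i) (a₀ i) ≤ dist (x k) a₀ := dist_le_pi_dist (x k) a₀ i
      rw [Real.dist_eq] at h1
      exact lt_of_le_of_lt h1 hk
    constructor
    · intro i
      have h1 : |a₀ i| ≤ ‖a₀‖ := by
        rw [← Real.norm_eq_abs]
        exact norm_le_pi_norm a₀ i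
      have h2 : |x k i| ≤ |a₀ i| + |x k i - a₀ i| := by
        have h6 := abs_add_le (a₀ i) (x k i - a₀ i)
        have h3 : a₀ i + (x k i - a₀ i) = x k i := by ring
        rw [h3] at h6
        exact h6
      have h4 := hcoord i
      have h5 : |x k i - a₀ i| < 1 := lt_of_lt_of_le h4 (min_le_right _ _)
      rw [hMdef]
      have hεpos := hε
      linarith
    · have h1 := hcoord (Fin.last n)
      have h2 : |x k (Fin.last n) - a₀ (Fin.last n)| < ε := lt_of_lt_of_le h1 (min_le_left _ _)
      have h3 : |a₀ (Fin.last n)| - |x k (Fin.last n)| ≤ |a₀ (Fin.last n) - x k (Fin.last n)| :=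
        abs_sub_abs_le_abs_sub _ _
      rw [abs_sub_comm] at h3
      have h4 : |a₀ (Fin.last n)| = 2 * ε := by rw [hεdef]; ring
      linarith
  obtain ⟨K, hK⟩ := eventually_atTop.1 hev
  set y := fun k => x (k + K) with hy
  have hylim : Tendsto y atTop (𝓝 a₀) := hlim.comp (tendsto_add_atTop_nat K)
  have hyM : ∀ k i, |y k i| ≤ M := fun k i => (hK (k+K) (Nat.le_add_left _ _)).1 i
  have hyε : ∀ k, ε ≤ |y k (Fin.last n)| := fun k => (hK (k+K) (Nat.le_add_left _ _)).2
  have hybad : ∀ k, Bad (polyOf (y k)) := by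
    intro k
    refine hx (k+K) fun h0 => ?_
    exfalso
    have := hyε k
    rw [hy] at this
    simp only at this
    rw [h0] at this
    simp at this
    linarith
  choose d hdm hdc using hybad
  have hsplit : (∃ᶠ k in atTop, ((d k).natDegree = 1 ∧ (d k) ^ 2 ∣ polyOf (y k) ∧
        d k ∣ derivative (derivative (polyOf (y k))))) ∨
      (∃ᶠ k in atTop, ((d k).natDegree = 2 ∧ Dsc (d k) ≤ 0 ∧ (d k) ^ 2 ∣ polyOf (y k))) := by
    by_contra hno
    rw [not_or] at hno
    obtain ⟨h1, h2⟩ := hno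
    rw [not_frequently] at h1 h2
    obtain ⟨k, hk1, hk2⟩ := (h1.and h2).exists
    exact (hdc k).elim hk1 hk2
  rcases hsplit with hfreq | hfreq
  · obtain ⟨φ, hφ, hφP⟩ := extraction_of_frequently_atTop hfreq
    exact bad_limit_case1 hn (hylim.comp hφ.tendsto_atTop) hε
      (fun k i => hyM (φ k) i) (fun k => hyε (φ k)) (fun k => hdm (φ k)) hφP
  · obtain ⟨φ, hφ, hφP⟩ := extraction_of_frequently_atTop hfreq
    exact bad_limit_case2 hn (hylim.comp hφ.tendsto_atTop) hε
      (fun k i => hyM (φ k) i) (fun k => hyε (φ k)) (fun k => hdm (φ k)) hφP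

end AuxVP

end AuxVP

/-- The set of real polynomials of degree exactly `n` verifying property (𝒫)
(a non-monic polynomial verifies (𝒫) when its monic associate does) is open in `ℝₙ[X]`. -/
theorem isOpen_verifiesP_real (n : ℕ) (hn : 1 ≤ n) :
    IsOpen {a : Fin (n + 1) → ℝ |
      (polyOf a).degree = (n : ℕ) ∧
      ∃ c : ℝ, c ≠ 0 ∧ VerifiesP (C c * polyOf a)} := by
  classical
  have hset : {a : Fin (n + 1) → ℝ |
      (polyOf a).degree = (n : ℕ) ∧
      ∃ c : ℝ, c ≠ 0 ∧ VerifiesP (C c * polyOf a)} =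
      {a : Fin (n+1) → ℝ | a (Fin.last n) ≠ 0 ∧ ¬ AuxVP.Bad (polyOf a)} := by
    ext a
    simp only [Set.mem_setOf_eq]
    constructor
    · rintro ⟨hdeg, c, hc, hv⟩
      refine ⟨(AuxVP.degree_polyOf_iff a).1 hdeg, fun hbad => ?_⟩
      exact AuxVP.notBad_of_verifiesP hv ((AuxVP.bad_C_mul_iff hc (polyOf a)).2 hbad)
    · rintro ⟨ha, hnb⟩
      have hdeg := (AuxVP.degree_polyOf_iff a).2 ha
      have hp0 : polyOf a ≠ 0 := by
        intro h0
        rw [h0, degree_zero] at hdeg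
        exact (WithBot.bot_ne_coe (a := (n:ℕ))) hdeg
      set c := ((polyOf a).leadingCoeff)⁻¹ with hcdef
      have hc : c ≠ 0 := inv_ne_zero (leadingCoeff_ne_zero.2 hp0)
      have hmon : (C c * polyOf a).Monic := by
        rw [hcdef, mul_comm]
        exact monic_mul_leadingCoeff_inv hp0
      refine ⟨hdeg, c, hc, AuxVP.verifiesP_of_monic_notBad hmon fun hb => ?_⟩
      exact hnb ((AuxVP.bad_C_mul_iff hc (polyOf a)).1 hb)
  rw [hset, ← isClosed_compl_iff]
  refine IsSeqClosed.isClosed ?_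
  intro x a₀ hx hlimx
  simp only [Set.mem_compl_iff, Set.mem_setOf_eq, not_and, not_not] at hx ⊢
  intro ha
  exact AuxVP.bad_limit hn hlimx ha (fun k => hx k)
end

section
/- Let K be a commutative field, λ ∈ K, and A a square matrix over K whose minimal polynomial is π_A(X) = (X − λ)². Then A is X-formable. -/
open Polynomial

open Module Submodule LinearMap in
set_option maxHeartbeats 1000000 in
lemma exists_xbasis {K : Type*} [Field K] {n : ℕ} (N : Matrix (Fin n) (Fin n) K)
    (hN2 : N * N = 0) (hN : N ≠ 0) :
    ∃ (r : ℕ) (b : Basis (Fin n) K (Fin n → K)), 0 < r ∧ 2 * r ≤ n ∧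
      ∀ j : Fin n, N.mulVecLin (b j) = if n - r ≤ (j : ℕ) then b j.rev else 0 := by
  set f : (Fin n → K) →ₗ[K] (Fin n → K) := N.mulVecLin with hf
  have hf2 : ∀ v, f (f v) = 0 := by
    intro v
    have h1 : (N * N).mulVecLin = f ∘ₗ f := Matrix.mulVecLin_mul N N
    rw [hN2] at h1
    have := congrArg (fun g => g v) h1.symm
    simpa using this
  have hfne : f ≠ 0 := by
    intro h
    apply hN
    have h1 : LinearMap.toMatrix' (Matrix.toLin' N) = N := LinearMap.toMatrix'_toLin' N
    rw [← h1]
    have h2 : Matrix.toLin' N = f := rfl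
    rw [h2, h]
    simp
  set W := LinearMap.range f with hW
  set r := finrank K W with hr
  have hWker : W ≤ LinearMap.ker f := by
    rintro x ⟨y, rfl⟩
    exact LinearMap.mem_ker.mpr (hf2 y)
  have hdim : finrank K (Fin n → K) = n := Module.finrank_fin_fun K
  have hrn : r + finrank K (LinearMap.ker f) = n := by
    have := LinearMap.finrank_range_add_finrank_ker f
    rw [hdim] at this
    exact this
  have hrle : r ≤ finrank K (LinearMap.ker f) := Submodule.finrank_mono hWker
  have hr1 : 0 < r := by
    rcases Nat.eq_zero_or_pos r with h | h
    · exact absurd (LinearMap.range_eq_bot.mp (Submodule.finrank_eq_zero.mp h)) hfne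
    · exact h
  -- basis of W
  let wb : Basis (Fin r) K W := Module.finBasis K W
  -- preimages
  have hcex : ∀ i : Fin r, ∃ x, f x = (wb i : Fin n → K) := fun i => (wb i).2
  choose c hc using hcex
  -- complement of W inside ker f
  obtain ⟨Uk, hcompl⟩ := Submodule.exists_isCompl (W.comap (LinearMap.ker f).subtype)
  set U := Uk.map (LinearMap.ker f).subtype with hU
  have hUker : U ≤ LinearMap.ker f := Submodule.map_subtype_le _ _
  have hmapW : (W.comap (LinearMap.ker f).subtype).map (LinearMap.ker f).subtype = W := by
    rw [Submodule.map_comap_subtype]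
    exact inf_eq_right.mpr hWker
  have hWU : W ⊔ U = LinearMap.ker f := by
    rw [← hmapW, hU, ← Submodule.map_sup, hcompl.sup_eq_top, Submodule.map_top,
      Submodule.range_subtype]
  set s := finrank K U with hs
  have hsr : r + s = finrank K (LinearMap.ker f) := by
    have h1 := Submodule.finrank_add_eq_of_isCompl hcompl
    have h2 : finrank K (W.comap (LinearMap.ker f).subtype) = r := by
      have h4 := Submodule.finrank_map_subtype_eq (LinearMap.ker f) (W.comap (LinearMap.ker f).subtype)
      rw [hmapW] at h4
      exact h4.symm
    have h3 : finrank K Uk = s := by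
      rw [hs, hU]
      exact (Submodule.finrank_map_subtype_eq _ _).symm
    rw [h2, h3] at h1
    exact h1
  have hrsn : r + s + r = n := by omega
  have h2rn : 2 * r ≤ n := by omega
  let ub : Basis (Fin s) K U := Module.finBasis K U
  -- the candidate basis family
  set bfun : Fin n → (Fin n → K) := fun k =>
    if hk : (k : ℕ) < r then (wb ⟨k, hk⟩ : Fin n → K)
    else if hk2 : n - r ≤ (k : ℕ) then c ⟨n - 1 - (k : ℕ), by have := k.isLt; omega⟩
    else (ub ⟨(k : ℕ) - r, by have := k.isLt; omega⟩ : Fin n → K) with hbfun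
  -- index computations
  have hbw : ∀ i : Fin r, bfun ⟨(i : ℕ), by have := i.isLt; omega⟩ = (wb i : Fin n → K) := by
    intro i
    simp only [hbfun]
    rw [dif_pos i.isLt]
  have hbu : ∀ i : Fin s, bfun ⟨r + (i : ℕ), by have := i.isLt; omega⟩ = (ub i : Fin n → K) := by
    intro i
    have h1 : ¬ (r + (i : ℕ) < r) := by omega
    have h2 : ¬ (n - r ≤ r + (i : ℕ)) := by have := i.isLt; omega
    simp only [hbfun]
    rw [dif_neg h1, dif_neg h2]
    exact congrArg (fun x => (ub x : Fin n → K))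
      (Fin.ext (show r + (i : ℕ) - r = (i : ℕ) from by omega))
  have hbc : ∀ i : Fin r, bfun ⟨n - 1 - (i : ℕ), by have := i.isLt; omega⟩ = c i := by
    intro i
    have hi := i.isLt
    have h1 : ¬ ((n - 1 - (i : ℕ)) < r) := by omega
    have h2 : n - r ≤ n - 1 - (i : ℕ) := by omega
    simp only [hbfun]
    rw [dif_neg h1, dif_pos h2]
    exact congrArg c (Fin.ext (show n - 1 - (n - 1 - (i : ℕ)) = (i : ℕ) from by
      have := i.isLt; omega))
  -- W is spanned by the wb's viewed in the ambient space
  have hWeq : W = Submodule.span K (Set.range (fun i : Fin r => (wb i : Fin n → K))) := by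
    conv_lhs => rw [← Submodule.map_subtype_top W, ← wb.span_eq]
    rw [Submodule.map_span]
    congr 1
    ext x
    simp [Set.range_comp]
  have hUeq : U = Submodule.span K (Set.range (fun i : Fin s => (ub i : Fin n → K))) := by
    conv_lhs => rw [← Submodule.map_subtype_top U, ← ub.span_eq]
    rw [Submodule.map_span]
    congr 1
    ext x
    simp [Set.range_comp]
  have hWspan : W ≤ Submodule.span K (Set.range bfun) := by
    rw [hWeq]
    apply Submodule.span_le.mpr
    rintro x ⟨i, rfl⟩
    exact Submodule.subset_span ⟨⟨(i : ℕ), by have := i.isLt; omega⟩, hbw i⟩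
  have hUspan : U ≤ Submodule.span K (Set.range bfun) := by
    rw [hUeq]
    apply Submodule.span_le.mpr
    rintro x ⟨i, rfl⟩
    exact Submodule.subset_span ⟨⟨r + (i : ℕ), by have := i.isLt; omega⟩, hbu i⟩
  have hkerspan : LinearMap.ker f ≤ Submodule.span K (Set.range bfun) := by
    rw [← hWU]; exact sup_le hWspan hUspan
  have hcspan : Submodule.span K (Set.range c) ≤ Submodule.span K (Set.range bfun) := by
    apply Submodule.span_le.mpr
    rintro x ⟨i, rfl⟩
    exact Submodule.subset_span ⟨⟨n - 1 - (i : ℕ), by have := i.isLt; omega⟩, hbc i⟩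
  have hWmap : W ≤ Submodule.map f (Submodule.span K (Set.range c)) := by
    rw [hWeq]
    apply Submodule.span_le.mpr
    rintro x ⟨i, rfl⟩
    exact ⟨c i, Submodule.subset_span ⟨i, rfl⟩, hc i⟩
  have htop : ⊤ ≤ Submodule.span K (Set.range bfun) := by
    intro v _
    obtain ⟨z, hz, hfz⟩ := hWmap (LinearMap.mem_range.mpr ⟨v, rfl⟩)
    have h1 : v - z ∈ LinearMap.ker f := by
      rw [LinearMap.mem_ker, map_sub, hfz, sub_self]
    have h2 : v = (v - z) + z := by ring
    rw [h2]
    exact Submodule.add_mem _ (hkerspan h1) (hcspan hz)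
  have hcard : Fintype.card (Fin n) = finrank K (Fin n → K) := by
    rw [hdim, Fintype.card_fin]
  let pb : Basis (Fin n) K (Fin n → K) := basisOfTopLeSpanOfCardEqFinrank bfun htop hcard
  have hpb : ⇑pb = bfun := coe_basisOfTopLeSpanOfCardEqFinrank bfun htop hcard
  clear_value pb
  refine ⟨r, pb, hr1, h2rn, ?_⟩
  intro j
  have hjn := j.isLt
  rw [show pb j = bfun j from by rw [hpb]]
  by_cases hj : n - r ≤ (j : ℕ)
  · rw [if_pos hj]
    have h1 : ¬ ((j : ℕ) < r) := by omega
    have hbj : bfun j = c ⟨n - 1 - (j : ℕ), by omega⟩ := by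
      simp only [hbfun]
      rw [dif_neg h1, dif_pos hj]
    rw [hbj, hc]
    have hrev : (j.rev : ℕ) = n - 1 - (j : ℕ) := by
      rw [Fin.val_rev]; omega
    have hrevlt : ((j.rev : Fin n) : ℕ) < r := by omega
    rw [show pb j.rev = bfun j.rev from by rw [hpb]]
    simp only [hbfun]
    rw [dif_pos hrevlt]
    exact congrArg (fun x => (wb x : Fin n → K))
      (Fin.ext (show n - 1 - (j : ℕ) = (j.rev : ℕ) from by omega))
  · rw [if_neg hj]
    by_cases h1 : (j : ℕ) < r
    · have hbj : bfun j = (wb ⟨(j : ℕ), h1⟩ : Fin n → K) := by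
        simp only [hbfun]
        rw [dif_pos h1]
      rw [hbj]
      exact LinearMap.mem_ker.mp (hWker (wb ⟨(j : ℕ), h1⟩).2)
    · have hbj : bfun j = (ub ⟨(j : ℕ) - r, by omega⟩ : Fin n → K) := by
        simp only [hbfun]
        rw [dif_neg h1, dif_neg hj]
      rw [hbj]
      exact LinearMap.mem_ker.mp (hUker (ub ⟨(j : ℕ) - r, by omega⟩).2)

open Module Submodule LinearMap in
set_option maxHeartbeats 1000000 in
/-- A square matrix whose minimal polynomial is `(X - λ)²` is X-formable. -/
theorem xformable_of_minpoly_sq {K : Type*} [Field K] {n : ℕ}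
    (A : Matrix (Fin n) (Fin n) K) (lam : K)
    (hmin : minpoly K A = (X - C lam) ^ 2) : IsXFormable A := by
  classical
  set N : Matrix (Fin n) (Fin n) K := A - algebraMap K (Matrix (Fin n) (Fin n) K) lam with hNdef
  have hN2 : N * N = 0 := by
    have haeval := minpoly.aeval K A
    rw [hmin] at haeval
    have h1 : (A - algebraMap K (Matrix (Fin n) (Fin n) K) lam) ^ 2 = 0 := by
      rw [← haeval]
      simp [sq]
    rw [hNdef, ← sq]
    exact h1
  have hNne : N ≠ 0 := by
    intro h
    have h0 : aeval A (X - C lam) = 0 := by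
      rw [map_sub, aeval_X, aeval_C]
      rw [hNdef] at h
      exact sub_eq_zero.mpr (sub_eq_zero.mp h) ▸ h
    have hdvd := minpoly.dvd K A h0
    rw [hmin] at hdvd
    have hq : (X - C lam : K[X]) ≠ 0 := X_sub_C_ne_zero lam
    have hdeg := Polynomial.natDegree_le_of_dvd hdvd hq
    simp [natDegree_pow, natDegree_X_sub_C] at hdeg
  obtain ⟨r, pb, hr1, h2rn, hpbf⟩ := exists_xbasis N hN2 hNne
  set e : Basis (Fin n) K (Fin n → K) := Pi.basisFun K (Fin n) with he
  set g : (Fin n → K) →ₗ[K] (Fin n → K) := Matrix.toLin e e A with hg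
  have hgv : ∀ v, g v = N.mulVecLin v + lam • v := by
    intro v
    have h1 : Matrix.toLin e e A = Matrix.toLin' A := by
      rw [he, Matrix.toLin_eq_toLin']
    rw [hg, h1]
    show A.mulVecLin v = _
    have hA : A = N + algebraMap K (Matrix (Fin n) (Fin n) K) lam := by
      rw [hNdef, sub_add_cancel]
    rw [hA, Matrix.mulVecLin_add]
    simp only [LinearMap.add_apply]
    congr 1
    rw [Algebra.algebraMap_eq_smul_one]
    show (lam • (1 : Matrix (Fin n) (Fin n) K)).mulVec v = lam • v
    rw [Matrix.smul_mulVec, Matrix.one_mulVec]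
  have hB : IsXForm (LinearMap.toMatrix pb pb g) := by
    intro i j hij hsum
    have hjn := j.isLt
    rw [LinearMap.toMatrix_apply, hgv, hpbf, map_add, map_smul]
    simp only [Finsupp.add_apply, Finsupp.smul_apply]
    have h1 : (pb.repr (pb j)) i = 0 := by
      rw [Basis.repr_self]
      exact Finsupp.single_eq_of_ne' (fun h => hij (congrArg Fin.val h.symm))
    by_cases h : n - r ≤ (j : ℕ)
    · rw [if_pos h, Basis.repr_self, h1]
      have h2 : j.rev ≠ i := by
        intro hh
        apply hsum
        rw [← hh, Fin.val_rev]
        omega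
      rw [Finsupp.single_eq_of_ne' h2]
      simp
    · rw [if_neg h, h1]
      simp
  refine ⟨LinearMap.toMatrix pb pb g, hB,
    ⟨e.toMatrix pb, pb.toMatrix e, Basis.toMatrix_mul_toMatrix_flip e pb,
      Basis.toMatrix_mul_toMatrix_flip pb e⟩, ?_⟩
  show A = e.toMatrix pb * LinearMap.toMatrix pb pb g * pb.toMatrix e
  rw [basis_toMatrix_mul_linearMap_toMatrix_mul_basis_toMatrix, hg, LinearMap.toMatrix_toLin]
end

section
/- Let K be a commutative field and let A, B be n×n X-form matrices over K. Then the product AB is an X-form matrix. -/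
/-- The product of two X-form matrices is an X-form matrix. -/
theorem isXForm_mul {K : Type*} [Field K] {n : ℕ} (A B : Matrix (Fin n) (Fin n) K)
    (hA : IsXForm A) (hB : IsXForm B) : IsXForm (A * B) := by
  intro i j hij hsum
  rw [Matrix.mul_apply]
  apply Finset.sum_eq_zero
  intro k _
  by_cases h1 : (i : ℕ) = (k : ℕ)
  · by_cases h2 : (k : ℕ) = (j : ℕ)
    · exact absurd (h1.trans h2) hij
    · by_cases h3 : (k : ℕ) + (j : ℕ) = n - 1
      · exact absurd (h1 ▸ h3) hsum
      · rw [hB k j h2 h3, mul_zero]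
  · by_cases h4 : (i : ℕ) + (k : ℕ) = n - 1
    · by_cases h2 : (k : ℕ) = (j : ℕ)
      · exact absurd (h2 ▸ h4) hsum
      · by_cases h3 : (k : ℕ) + (j : ℕ) = n - 1
        · exact absurd (Nat.add_left_cancel ((Nat.add_comm _ _).trans (h4.trans h3.symm)) : (i:ℕ) = j) hij
        · rw [hB k j h2 h3, mul_zero]
    · rw [hA i k h1 h4, zero_mul]
end
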